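/- arXiv:2201.04211 — 5 statements merged into one kernel-verified Lean document; each statement's English description precedes it below -/
import Mathlib

section
/- Let X and X' be n×p real matrices with entries bounded by 1 in absolute value that differ only in their first row, with ‖X − X'‖ ≤ 1 (Frobenius norm). Suppose that for a fixed noise level σ = σ₀ > 0, the mechanism Y(X) = X + C, where C is an n×p matrix of i.i.d. N(0, σ₀²) entries, satisfies (ε, δ)-differential privacy: for every measurable set S of n×p matrices, P[Y(X) ∈ S] ≤ e^ε P[Y(X') ∈ S] + δ. Then the mechanism Y(X) = A X + C, where A is a random n×n orthogonal matrix drawn from the Haar (uniform) distribution on the orthogonal group independently of C, also satisfies (ε, δ)-differential privacy for the same pair X, X'. -/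
open MeasureTheory ProbabilityTheory Real

noncomputable section

/-- The space of n×p real data matrices, represented as functions. -/
abbrev Mat (n p : ℕ) := Fin n → Fin p → ℝ

/-- Frobenius (L₂) norm of a matrix. -/
def frob {n p : ℕ} (M : Mat n p) : ℝ := Real.sqrt (∑ i, ∑ j, (M i j) ^ 2)

/-- The distribution of an n×p matrix of i.i.d. N(0, σ²) entries. -/
def gaussNoise (n p : ℕ) (σ : ℝ) : Measure (Mat n p) :=
  Measure.pi fun _ => Measure.pi fun _ => gaussianReal 0 ⟨σ ^ 2, sq_nonneg σ⟩

/-- Matrix product. -/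
def mdot {n p m : ℕ} (A : Fin n → Fin p → ℝ) (B : Fin p → Fin m → ℝ) :
    Fin n → Fin m → ℝ := fun i j => ∑ k, A i k * B k j

/-- Matrix transpose. -/
def transp {n p : ℕ} (M : Mat n p) : Mat p n := fun j i => M i j

/-- Trace of a square matrix. -/
def trace' {n : ℕ} (T : Mat n n) : ℝ := ∑ i, T i i

/-- `A` is an orthogonal matrix: A Aᵀ = I. -/
def IsOrth {n : ℕ} (A : Mat n n) : Prop :=
  mdot A (transp A) = fun i j => if i = j then (1 : ℝ) else 0

/-- Neighboring data sets: they differ in only one row and the Frobenius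
norm of the difference is at most 1. -/
def Neighbors {n p : ℕ} (X X' : Mat n p) : Prop :=
  (∃ i, ∀ k, k ≠ i → X k = X' k) ∧ frob (X - X') ≤ 1

/-- `μ` is the Haar (uniform) probability distribution on the orthogonal group O(n):
a probability measure supported on orthogonal matrices that is invariant under
left translation by any orthogonal matrix. -/
def IsHaarOrth {n : ℕ} (μ : Measure (Mat n n)) : Prop :=
  IsProbabilityMeasure μ ∧ μ {A | IsOrth A}ᶜ = 0 ∧
    ∀ Q : Mat n n, IsOrth Q → μ.map (fun A => mdot Q A) = μ

/-! ### Auxiliary lemmas -/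

section Aux

open Matrix

/-- lintegral of a product of coordinate functions over a finite product measure. -/
lemma lintegral_pi_prod {α : Type*} [MeasurableSpace α] (μ : Measure α) [SigmaFinite μ] :
    ∀ {n : ℕ} (f : Fin n → α → ENNReal), (∀ i, Measurable (f i)) →
    ∫⁻ x : Fin n → α, ∏ i, f i (x i) ∂(Measure.pi fun _ => μ) = ∏ i, ∫⁻ t, f i t ∂μ := by
  intro n
  induction n with
  | zero => intro f hf; simp [lintegral_const]
  | succ m ih =>
    intro f hf
    have hmp := (measurePreserving_piFinSuccAbove (fun _ : Fin (m+1) => μ) 0).symm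
    have hmeas : Measurable fun x : Fin (m+1) → α => ∏ i, f i (x i) := by
      exact Finset.measurable_prod _ fun i _ => (hf i).comp (measurable_pi_apply i)
    rw [← hmp.lintegral_comp hmeas]
    have heq : ∀ y : α × (Fin m → α),
        (∏ i, f i (((MeasurableEquiv.piFinSuccAbove (fun _ => α) 0).symm y) i))
        = f 0 y.1 * ∏ j : Fin m, f j.succ (y.2 j) := by
      intro y
      simp [MeasurableEquiv.piFinSuccAbove, Fin.insertNth_zero, Fin.prod_univ_succ]
    simp_rw [heq]
    rw [lintegral_prod]
    · have hmeas2 : Measurable fun z : Fin m → α => ∏ j, f j.succ (z j) :=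
        Finset.measurable_prod _ fun j _ => (hf j.succ).comp (measurable_pi_apply j)
      have h2 : ∀ y : α, (∫⁻ z : Fin m → α, f 0 y * ∏ j, f j.succ (z j)
            ∂(Measure.pi fun _ : Fin m => μ)) = f 0 y * ∏ j : Fin m, ∫⁻ t, f j.succ t ∂μ :=
        fun y => by
        rw [lintegral_const_mul _ hmeas2, ih _ fun j => hf j.succ]
      simp only []
      simp_rw [h2]
      rw [lintegral_mul_const _ (hf 0), Fin.prod_univ_succ]
    · apply Measurable.aemeasurable
      exact ((hf 0).comp measurable_fst).mul
        (Finset.measurable_prod _ fun j _ => (hf j.succ).comp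
          ((measurable_pi_apply j).comp measurable_snd))

lemma gauss_pi_withDensity {n : ℕ} {v : NNReal} (hv : v ≠ 0) :
    Measure.pi (fun _ : Fin n => gaussianReal 0 v)
      = (Measure.pi fun _ : Fin n => (volume : Measure ℝ)).withDensity
          (fun x => ∏ i, gaussianPDF 0 v (x i)) := by
  refine Measure.pi_eq fun s hs => ?_
  rw [withDensity_apply _ (MeasurableSet.univ_pi hs),
    ← lintegral_indicator (MeasurableSet.univ_pi hs)]
  have hind : (Set.univ.pi s).indicator (fun x : Fin n → ℝ => ∏ i, gaussianPDF 0 v (x i))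
      = fun x => ∏ i, (s i).indicator (gaussianPDF 0 v) (x i) := by
    funext x
    by_cases h : x ∈ Set.univ.pi s
    · rw [Set.indicator_of_mem h]
      exact Finset.prod_congr rfl fun i _ =>
        (Set.indicator_of_mem (h i (Set.mem_univ i)) _).symm
    · rw [Set.indicator_of_notMem h]
      rw [Set.mem_univ_pi] at h
      push_neg at h
      obtain ⟨i, hi⟩ := h
      exact (Finset.prod_eq_zero (Finset.mem_univ i)
        (Set.indicator_of_notMem hi _)).symm
  rw [hind, lintegral_pi_prod _ _ fun i => (measurable_gaussianPDF 0 v).indicator (hs i)]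
  refine Finset.prod_congr rfl fun i _ => ?_
  rw [lintegral_indicator (hs i), gaussianReal_of_var_ne_zero 0 hv,
    withDensity_apply _ (hs i)]

lemma sum_sq_mulVec {n : ℕ} {M : Matrix (Fin n) (Fin n) ℝ} (h : M * Mᵀ = 1) (x : Fin n → ℝ) :
    ∑ i, (M.mulVec x i) ^ 2 = ∑ i, (x i) ^ 2 := by
  have h' : Mᵀ * M = 1 := mul_eq_one_comm.mp h
  have : M.mulVec x ⬝ᵥ M.mulVec x = x ⬝ᵥ x := by
    rw [Matrix.dotProduct_mulVec, ← Matrix.mulVec_transpose, Matrix.mulVec_mulVec, h',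
      Matrix.one_mulVec]
  simpa [dotProduct, pow_two] using this

lemma gauss_prod_pdf {n : ℕ} (v : NNReal) (y : Fin n → ℝ) :
    ∏ i, gaussianPDFReal 0 v (y i)
      = ((√(2 * π * v))⁻¹) ^ n * rexp (-(∑ i, (y i) ^ 2) / (2 * v)) := by
  simp only [gaussianPDFReal, sub_zero]
  rw [Finset.prod_mul_distrib, Finset.prod_const, Finset.card_univ, Fintype.card_fin,
    ← Real.exp_sum]
  congr 1
  rw [← Finset.sum_div, Finset.sum_neg_distrib]

lemma gauss_pi_map_orth {n : ℕ} {v : NNReal} (hv : v ≠ 0) {M : Matrix (Fin n) (Fin n) ℝ}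
    (h : M * Mᵀ = 1) :
    (Measure.pi fun _ : Fin n => gaussianReal 0 v).map (Matrix.toLin' M)
      = Measure.pi fun _ : Fin n => gaussianReal 0 v := by
  have hdet2 : M.det * M.det = 1 := by
    have := congrArg Matrix.det h
    rwa [Matrix.det_mul, Matrix.det_transpose, Matrix.det_one] at this
  have hdet : M.det ≠ 0 := by
    intro h0; rw [h0, mul_zero] at hdet2; exact zero_ne_one hdet2
  have habs : |M.det|⁻¹ = 1 := by
    rcases mul_self_eq_one_iff.mp hdet2 with h1 | h1 <;> simp [h1]
  have hTmeas : Measurable (Matrix.toLin' M) :=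
    (Matrix.toLin' M).continuous_of_finiteDimensional.measurable
  have hvol : Measure.map (Matrix.toLin' M) (Measure.pi fun _ : Fin n => (volume : Measure ℝ))
      = Measure.pi fun _ : Fin n => (volume : Measure ℝ) := by
    have h2 := Real.map_matrix_volume_pi_eq_smul_volume_pi hdet
    rw [← volume_pi, h2, abs_inv, habs, ENNReal.ofReal_one, one_smul]
  set g : (Fin n → ℝ) → ENNReal := fun x => ∏ i, gaussianPDF 0 v (x i) with hg
  have hgmeas : Measurable g :=
    Finset.measurable_prod _ fun i _ => (measurable_gaussianPDF 0 v).comp (measurable_pi_apply i)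
  have hgT : ∀ x, g (Matrix.toLin' M x) = g x := by
    intro x
    simp only [hg, gaussianPDF, Matrix.toLin'_apply]
    rw [← ENNReal.ofReal_prod_of_nonneg fun i _ => gaussianPDFReal_nonneg 0 v _,
      ← ENNReal.ofReal_prod_of_nonneg fun i _ => gaussianPDFReal_nonneg 0 v _]
    congr 1
    rw [gauss_prod_pdf, gauss_prod_pdf, sum_sq_mulVec h]
  ext s hs
  rw [gauss_pi_withDensity hv, Measure.map_apply hTmeas hs,
    withDensity_apply _ (hTmeas hs), withDensity_apply _ hs]
  calc ∫⁻ x in Matrix.toLin' M ⁻¹' s, g x ∂(Measure.pi fun _ : Fin n => (volume : Measure ℝ))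
      = ∫⁻ x in Matrix.toLin' M ⁻¹' s, g (Matrix.toLin' M x)
          ∂(Measure.pi fun _ : Fin n => (volume : Measure ℝ)) :=
        lintegral_congr fun x => (hgT x).symm
    _ = ∫⁻ y in s, g y ∂(Measure.map (Matrix.toLin' M)
          (Measure.pi fun _ : Fin n => (volume : Measure ℝ))) :=
        (setLIntegral_map hs hgmeas hTmeas).symm
    _ = ∫⁻ y in s, g y ∂(Measure.pi fun _ : Fin n => (volume : Measure ℝ)) := by rw [hvol]

instance gaussNoise_prob (n p : ℕ) (σ : ℝ) : IsProbabilityMeasure (gaussNoise n p σ) := by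
  unfold gaussNoise
  have : ∀ v : NNReal, IsProbabilityMeasure (gaussianReal 0 v) := fun v => inferInstance
  have h := this ⟨σ ^ 2, sq_nonneg σ⟩
  infer_instance

lemma measurable_transp {n p : ℕ} : Measurable (transp : Mat n p → Mat p n) :=
  measurable_pi_lambda _ fun j => measurable_pi_lambda _ fun i =>
    (measurable_pi_apply j).comp (measurable_pi_apply i)

lemma map_transp (n p : ℕ) (σ : ℝ) :
    (gaussNoise n p σ).map transp = gaussNoise p n σ := by
  have : IsProbabilityMeasure ((gaussNoise n p σ).map transp) :=
    Measure.isProbabilityMeasure_map measurable_transp.aemeasurable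
  set D : Set (Set (Fin n → ℝ)) :=
    Set.pi Set.univ '' Set.pi Set.univ (fun _ : Fin n => {s : Set ℝ | MeasurableSet s}) with hD
  have hDspan : IsCountablySpanning D := by
    refine ⟨fun _ => Set.univ, fun _ => ⟨fun _ => Set.univ, fun i _ => ?_, by simp⟩,
      Set.iUnion_const _⟩
    simp
  set C : Set (Set (Mat p n)) := Set.pi Set.univ '' Set.pi Set.univ (fun _ : Fin p => D) with hC
  have hgen : (inferInstance : MeasurableSpace (Mat p n)) = MeasurableSpace.generateFrom C :=
    (generateFrom_eq_pi (fun _ => generateFrom_pi) (fun _ => hDspan)).symm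
  refine ext_of_generate_finite C hgen
    (IsPiSystem.pi fun _ => IsPiSystem.pi fun _ =>
      MeasurableSpace.isPiSystem_measurableSet) ?_ ?_
  · rintro _ ⟨S, hS, rfl⟩
    choose t hmeas heq using fun j => hS j (Set.mem_univ j)
    have htmeas : ∀ j i, MeasurableSet (t j i) := fun j i => hmeas j i (Set.mem_univ i)
    have hSmeas : ∀ j, MeasurableSet (S j) := fun j =>
      (heq j) ▸ MeasurableSet.univ_pi fun i => htmeas j i
    rw [Measure.map_apply measurable_transp (MeasurableSet.univ_pi hSmeas)]
    have hpre : transp ⁻¹' Set.pi Set.univ S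
        = Set.pi Set.univ fun i : Fin n => Set.pi Set.univ fun j : Fin p => t j i := by
      ext x
      simp only [Set.mem_preimage, Set.mem_univ_pi]
      constructor
      · intro hx i j
        have := hx j
        rw [← heq j] at this
        exact this i (Set.mem_univ i)
      · intro hx j
        rw [← heq j]
        exact fun i _ => hx i j
    rw [hpre]
    unfold gaussNoise
    have : ∀ v : NNReal, IsProbabilityMeasure (gaussianReal 0 v) := fun v => inferInstance
    have h := this ⟨σ ^ 2, sq_nonneg σ⟩
    rw [Measure.pi_pi, Measure.pi_pi]
    simp_rw [Measure.pi_pi]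
    rw [Finset.prod_comm]
    exact Finset.prod_congr rfl fun j _ => by rw [← heq j, Measure.pi_pi]
  · simp

/-- IsOrth in terms of `Matrix`. -/
lemma isOrth_matrix {n : ℕ} {A : Mat n n} (h : IsOrth A) :
    (Matrix.of A) * (Matrix.of A)ᵀ = 1 := by
  ext i j
  have := congrFun (congrFun h i) j
  simpa [Matrix.mul_apply, mdot, transp, Matrix.one_apply] using this

lemma transp_transp {n p : ℕ} (A : Mat n p) : transp (transp A) = A := rfl

lemma IsOrth.transp' {n : ℕ} {A : Mat n n} (h : IsOrth A) : IsOrth (transp A) := by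
  have h2 : (Matrix.of A)ᵀ * (Matrix.of A) = 1 := mul_eq_one_comm.mp (isOrth_matrix h)
  unfold IsOrth
  rw [transp_transp]
  funext i j
  have := congrFun (congrFun (congrArg (fun M : Matrix (Fin n) (Fin n) ℝ => (M : _)) h2) i) j
  simpa [Matrix.mul_apply, mdot, transp, Matrix.one_apply] using this

lemma measurable_mdot_left {n p : ℕ} (A : Mat n n) :
    Measurable (fun x : Mat n p => mdot A x) :=
  measurable_pi_lambda _ fun i' => measurable_pi_lambda _ fun j =>
    Finset.measurable_sum _ fun k _ =>
      ((show Measurable fun x : Mat n p => x k j from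
        (measurable_pi_apply j).comp (measurable_pi_apply k))).const_mul _

/-- Rotation invariance of the i.i.d. Gaussian matrix distribution. -/
lemma gaussNoise_map_orth {n p : ℕ} {σ : ℝ} (hσ : σ ≠ 0) {A : Mat n n} (hA : IsOrth A) :
    (gaussNoise n p σ).map (fun x => mdot A x) = gaussNoise n p σ := by
  have hv : (⟨σ ^ 2, sq_nonneg σ⟩ : NNReal) ≠ 0 := by
    intro h0
    exact pow_ne_zero 2 hσ (by simpa using congrArg Subtype.val h0)
  set M : Matrix (Fin n) (Fin n) ℝ := Matrix.of A with hM
  have hMM : M * Mᵀ = 1 := isOrth_matrix hA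
  have hdecomp : (fun x : Mat n p => mdot A x)
      = transp ∘ (fun y : Mat p n => fun j => M.mulVec (y j)) ∘ transp := by
    funext x i j
    simp [mdot, transp, Matrix.mulVec, dotProduct, Function.comp, hM]
  have mpcol : MeasurePreserving (M.mulVec)
      (Measure.pi fun _ : Fin n => gaussianReal 0 ⟨σ ^ 2, sq_nonneg σ⟩)
      (Measure.pi fun _ : Fin n => gaussianReal 0 ⟨σ ^ 2, sq_nonneg σ⟩) := by
    rw [show (M.mulVec : (Fin n → ℝ) → (Fin n → ℝ)) = ⇑(Matrix.toLin' M) from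
        funext fun v => (Matrix.toLin'_apply M v).symm]
    exact ⟨(Matrix.toLin' M).continuous_of_finiteDimensional.measurable,
      gauss_pi_map_orth hv hMM⟩
  have mpF : MeasurePreserving (fun y : Mat p n => fun j => M.mulVec (y j))
      (gaussNoise p n σ) (gaussNoise p n σ) := by
    unfold gaussNoise
    have : ∀ v : NNReal, IsProbabilityMeasure (gaussianReal 0 v) := fun v => inferInstance
    have h := this ⟨σ ^ 2, sq_nonneg σ⟩
    exact measurePreserving_pi _ _ fun _ => mpcol
  have mp1 : MeasurePreserving (transp : Mat n p → Mat p n)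
      (gaussNoise n p σ) (gaussNoise p n σ) := ⟨measurable_transp, map_transp n p σ⟩
  have mp2 : MeasurePreserving (transp : Mat p n → Mat n p)
      (gaussNoise p n σ) (gaussNoise n p σ) := ⟨measurable_transp, map_transp p n σ⟩
  have := ((mp2.comp mpF).comp mp1).map_eq
  rw [hdecomp]
  exact this

lemma mdot_add {n p : ℕ} (A : Mat n n) (X D : Mat n p) :
    mdot A (X + D) = mdot A X + mdot A D := by
  funext i j
  simp [mdot, mul_add, Finset.sum_add_distrib]

lemma mdot_mdot {n p : ℕ} (A B : Mat n n) (C : Mat n p) :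
    mdot A (mdot B C) = mdot (mdot A B) C := by
  funext i j
  simp only [mdot, Finset.mul_sum, Finset.sum_mul, mul_assoc]
  exact Finset.sum_comm

lemma mdot_orth_cancel {n p : ℕ} {A : Mat n n} (hA : IsOrth A) (C : Mat n p) :
    mdot A (mdot (transp A) C) = C := by
  rw [mdot_mdot, hA]
  funext i j
  simp [mdot, Finset.sum_ite_eq]

end Aux

section Aux2

lemma measurable_addl {n p : ℕ} (Z : Mat n p) : Measurable fun c : Mat n p => Z + c := by
  have h : ∀ i j, Measurable fun c : Mat n p => c i j := fun i j =>
    (measurable_pi_apply j).comp (measurable_pi_apply i)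
  exact measurable_pi_lambda _ fun i => measurable_pi_lambda _ fun j =>
    ((h i j).const_add (Z i j))

lemma measurable_mech {n p : ℕ} (X : Mat n p) :
    Measurable fun Ac : Mat n n × Mat n p => mdot Ac.1 X + Ac.2 :=
  measurable_pi_lambda _ fun i => measurable_pi_lambda _ fun j =>
    (show Measurable fun Ac : Mat n n × Mat n p => (∑ k, Ac.1 i k * X k j) + Ac.2 i j from
      (Finset.measurable_sum _ fun k _ =>
        (show Measurable fun Ac : Mat n n × Mat n p => Ac.1 i k from
          (measurable_pi_apply k).comp ((measurable_pi_apply i).comp measurable_fst)).mul_const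
            _).add
        ((measurable_pi_apply j).comp ((measurable_pi_apply i).comp measurable_snd)))

end Aux2

/-- If the additive-noise mechanism `Y(X) = X + C` (setting (A)),
with `C` an n×p matrix of i.i.d. N(0, σ₀²) entries, is (ε, δ)-differentially private
for the given pair `X, X'` (entries bounded by 1, differing only in the first row,
with ‖X − X'‖ ≤ 1 in Frobenius norm), then the mechanism `Y(X) = A X + C`
(setting (C)), with `A` Haar-uniform on the orthogonal group O(n) independent of `C`,
is also (ε, δ)-differentially private for the same pair. -/
theorem stmt1 {n p : ℕ} (hn : 0 < n) (σ₀ ε δ : ℝ) (hσ : 0 < σ₀)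
    (X X' : Mat n p)
    (hXb : ∀ i j, |X i j| ≤ 1) (hX'b : ∀ i j, |X' i j| ≤ 1)
    (hrow : ∀ k : Fin n, k ≠ ⟨0, hn⟩ → X k = X' k)
    (hnorm : frob (X - X') ≤ 1)
    (μ : Measure (Mat n n)) (hHaar : IsHaarOrth μ)
    (hA : ∀ S : Set (Mat n p), MeasurableSet S →
      (gaussNoise n p σ₀).map (fun c => X + c) S ≤
        ENNReal.ofReal (Real.exp ε) * (gaussNoise n p σ₀).map (fun c => X' + c) S
          + ENNReal.ofReal δ) :
    ∀ S : Set (Mat n p), MeasurableSet S →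
      (μ.prod (gaussNoise n p σ₀)).map (fun Ac => mdot Ac.1 X + Ac.2) S ≤
        ENNReal.ofReal (Real.exp ε) *
          (μ.prod (gaussNoise n p σ₀)).map (fun Ac => mdot Ac.1 X' + Ac.2) S
          + ENNReal.ofReal δ := by
  intro S hS
  obtain ⟨hμprob, hμorth, _⟩ := hHaar
  haveI := hμprob
  set ν := gaussNoise n p σ₀ with hν
  have hσ0 : σ₀ ≠ 0 := ne_of_gt hσ
  have key : ∀ Z : Mat n p,
      (μ.prod ν).map (fun Ac => mdot Ac.1 Z + Ac.2) S
        = ∫⁻ A, ν ((fun c => mdot A Z + c) ⁻¹' S) ∂μ := by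
    intro Z
    rw [Measure.map_apply (measurable_mech Z) hS, Measure.prod_apply ((measurable_mech Z) hS)]
    rfl
  have hmeasX' : Measurable fun A => ν ((fun c => mdot A X' + c) ⁻¹' S) :=
    measurable_measure_prodMk_left ((measurable_mech X') hS)
  have hpoint : ∀ A, IsOrth A →
      ν ((fun c => mdot A X + c) ⁻¹' S)
        ≤ ENNReal.ofReal (Real.exp ε) * ν ((fun c => mdot A X' + c) ⁻¹' S)
            + ENNReal.ofReal δ := by
    intro A hOA
    set T : Set (Mat n p) := (fun y => mdot A y) ⁻¹' S with hT
    have hTmeas : MeasurableSet T := (measurable_mdot_left A) hS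
    have htrans : ∀ Z : Mat n p,
        ν ((fun c => mdot A Z + c) ⁻¹' S) = ν.map (fun c => Z + c) T := by
      intro Z
      have hset : (fun c : Mat n p => mdot A Z + c) ⁻¹' S
          = (fun c => mdot (transp A) c) ⁻¹' ((fun c => Z + c) ⁻¹' T) := by
        ext c
        simp only [Set.mem_preimage, hT]
        rw [mdot_add, mdot_orth_cancel hOA]
      rw [hset,
        ← Measure.map_apply (measurable_mdot_left (transp A)) ((measurable_addl Z) hTmeas),
        hν, gaussNoise_map_orth hσ0 hOA.transp',
        Measure.map_apply (measurable_addl Z) hTmeas]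
    rw [htrans X, htrans X']
    exact hA T hTmeas
  rw [key X, key X']
  have hae : ∀ᵐ A ∂μ, IsOrth A := ae_iff.mpr hμorth
  calc ∫⁻ A, ν ((fun c => mdot A X + c) ⁻¹' S) ∂μ
      ≤ ∫⁻ A, (ENNReal.ofReal (Real.exp ε) * ν ((fun c => mdot A X' + c) ⁻¹' S)
          + ENNReal.ofReal δ) ∂μ :=
        lintegral_mono_ae (hae.mono fun A hA' => hpoint A hA')
    _ = ENNReal.ofReal (Real.exp ε) * ∫⁻ A, ν ((fun c => mdot A X' + c) ⁻¹' S) ∂μ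
          + ENNReal.ofReal δ := by
        rw [lintegral_add_right _ measurable_const, lintegral_const_mul _ hmeasX',
          lintegral_const, measure_univ, mul_one]
end
end

section
/- Let Y(X) be a data release mechanism such that for every input matrix X, the distribution of Y(X) is absolutely continuous with respect to Lebesgue measure with density p_{Y(X)}. For neighboring X and X', define S̄_{X,X'} = {y : p_{Y(X)}(y) > e^ε p_{Y(X')}(y)}. If there exists a neighboring pair X, X' with P[Y(X) ∈ S̄_{X,X'}] > δ, then for every 0 < ε' < ε, the mechanism Y(X) is not (ε', δ')-differentially private with δ' = (1 − e^{ε'}/e^ε)·δ; that is, there exist a measurable set S and a neighboring pair X, X' such that P[Y(X) ∈ S] > e^{ε'} P[Y(X') ∈ S] + δ'. -/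
open MeasureTheory ProbabilityTheory Real

noncomputable section

/-- Let `P X` be the law of a data release mechanism `Y(X)` which is
absolutely continuous with density `f X` with respect to Lebesgue measure. If there is
a neighboring pair `X, X'` for which the set `S̄_{X,X'} = {y : f X y > e^ε f X' y}`
satisfies `P[Y(X) ∈ S̄_{X,X'}] > δ`, then for every `0 < ε' < ε` the mechanism is not
(ε', δ')-differentially private with `δ' = (1 − e^{ε'}/e^ε) δ`: there is a measurable
set `S` and a neighboring pair witnessing the violation. -/
theorem stmt3 {n p : ℕ} (ε δ : ℝ)
    (P : Mat n p → Measure (Mat n p))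
    (f : Mat n p → Mat n p → ℝ)
    (hf : ∀ X, Measurable (f X))
    (hdens : ∀ X, P X = volume.withDensity fun y => ENNReal.ofReal (f X y))
    (hS : ∃ X X' : Mat n p, Neighbors X X' ∧
      ENNReal.ofReal δ < P X {y | f X y > Real.exp ε * f X' y}) :
    ∀ ε' : ℝ, 0 < ε' → ε' < ε →
      ∃ S : Set (Mat n p), MeasurableSet S ∧ ∃ X X' : Mat n p, Neighbors X X' ∧
        ENNReal.ofReal (Real.exp ε') * P X' S
            + ENNReal.ofReal ((1 - Real.exp ε' / Real.exp ε) * δ) < P X S := by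
  obtain ⟨X, X', hN, hPS⟩ := hS
  intro ε' hε'0 hε'ε
  set S : Set (Mat n p) := {y | f X y > Real.exp ε * f X' y} with hSdef
  have hSm : MeasurableSet S := measurableSet_lt ((hf X').const_mul _) (hf X)
  set T : ℕ → Set (Mat n p) :=
    fun k => (S ∩ {y | f X y ≤ k}) ∩ Metric.closedBall 0 k with hT
  have hTm : ∀ k, MeasurableSet (T k) := fun k =>
    (hSm.inter (measurableSet_le (hf X) measurable_const)).inter
      measurableSet_closedBall
  have hmono : Monotone T := by
    intro a b hab y hy
    refine ⟨⟨hy.1.1, ?_⟩, Metric.closedBall_subset_closedBall (by exact_mod_cast hab) hy.2⟩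
    have h1 : f X y ≤ (a : ℝ) := hy.1.2
    show f X y ≤ (b : ℝ)
    exact h1.trans (by exact_mod_cast hab)
  have hUnion : (⋃ k, T k) = S := by
    ext y
    constructor
    · rintro ⟨_, ⟨k, rfl⟩, hy⟩; exact hy.1.1
    · intro hy
      obtain ⟨k₁, hk₁⟩ := exists_nat_ge (f X y)
      obtain ⟨k₂, hk₂⟩ := exists_nat_ge (dist y 0)
      refine Set.mem_iUnion.2 ⟨max k₁ k₂, ⟨⟨hy, ?_⟩, ?_⟩⟩
      · show f X y ≤ ((max k₁ k₂ : ℕ) : ℝ)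
        exact hk₁.trans (by exact_mod_cast le_max_left k₁ k₂)
      · exact Metric.mem_closedBall.2 (hk₂.trans (by exact_mod_cast le_max_right k₁ k₂))
  -- extract a finite-measure piece
  have hsup : P X S = ⨆ k, P X (T k) := by
    rw [← hUnion]; exact (hmono.directed_le).measure_iUnion
  have : ∃ k, ENNReal.ofReal δ < P X (T k) := by
    rw [← lt_iSup_iff, ← hsup]; exact hPS
  obtain ⟨k, hk⟩ := this
  -- finiteness of P X (T k)
  have hfin : P X (T k) ≠ ⊤ := by
    have h1 : P X (T k) = ∫⁻ y in T k, ENNReal.ofReal (f X y) := by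
      rw [hdens X, withDensity_apply _ (hTm k)]
    have h2 : (∫⁻ y in T k, ENNReal.ofReal (f X y)) ≤ ∫⁻ _ in T k, ((k : ℕ) : ENNReal) := by
      refine setLIntegral_mono measurable_const fun y hy => ?_
      rw [← ENNReal.ofReal_natCast]
      exact ENNReal.ofReal_le_ofReal hy.1.2
    have h3 : (∫⁻ _ in T k, ((k : ℕ) : ENNReal)) = ((k : ℕ) : ENNReal) * volume (T k) :=
      setLIntegral_const _ _
    have h4 : volume (T k) ≤ volume (Metric.closedBall (0 : Mat n p) k) :=
      measure_mono (Set.inter_subset_right)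
    have h5 : volume (Metric.closedBall (0 : Mat n p) k) < ⊤ :=
      (isCompact_closedBall 0 (k : ℝ)).measure_lt_top
    refine ne_top_of_le_ne_top ?_ (h1 ▸ h2.trans_eq h3)
    exact ENNReal.mul_ne_top (ENNReal.natCast_ne_top k) (lt_of_le_of_lt h4 h5).ne
  -- key domination: P X' (T k) ≤ exp(-ε) * P X (T k)
  have hdom : P X' (T k) ≤ ENNReal.ofReal (Real.exp (-ε)) * P X (T k) := by
    rw [hdens X, hdens X', withDensity_apply _ (hTm k), withDensity_apply _ (hTm k),
      ← lintegral_const_mul _ (by exact ((hf X).ennreal_ofReal))]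
    refine setLIntegral_mono (((hf X).ennreal_ofReal).const_mul _) fun y hy => ?_
    have hyS : f X y > Real.exp ε * f X' y := hy.1.1
    have : f X' y ≤ Real.exp (-ε) * f X y := by
      rw [Real.exp_neg, ← div_eq_inv_mul, le_div_iff₀ (Real.exp_pos ε)]
      nlinarith [hyS]
    calc ENNReal.ofReal (f X' y) ≤ ENNReal.ofReal (Real.exp (-ε) * f X y) :=
          ENNReal.ofReal_le_ofReal this
      _ = ENNReal.ofReal (Real.exp (-ε)) * ENNReal.ofReal (f X y) :=
          ENNReal.ofReal_mul (Real.exp_pos _).le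
  refine ⟨T k, hTm k, X, X', hN, ?_⟩
  set r : ℝ := Real.exp (ε' - ε) with hr
  have hr0 : 0 < r := Real.exp_pos _
  have hr1 : r < 1 := Real.exp_lt_one_iff.2 (by linarith)
  have hdiv : Real.exp ε' / Real.exp ε = r := by
    rw [hr, Real.exp_sub]
  have hA : P X (T k) ≠ 0 := fun h => by simp [h] at hk
  have hpart1 : ENNReal.ofReal (Real.exp ε') * P X' (T k)
      ≤ ENNReal.ofReal r * P X (T k) := by
    calc ENNReal.ofReal (Real.exp ε') * P X' (T k)
        ≤ ENNReal.ofReal (Real.exp ε') *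
            (ENNReal.ofReal (Real.exp (-ε)) * P X (T k)) := mul_le_mul_right hdom _
      _ = ENNReal.ofReal r * P X (T k) := by
          rw [← mul_assoc, ← ENNReal.ofReal_mul (Real.exp_pos _).le, ← Real.exp_add, hr,
            sub_eq_add_neg]
  have hpart2 : ENNReal.ofReal ((1 - Real.exp ε' / Real.exp ε) * δ)
      = ENNReal.ofReal (1 - r) * ENNReal.ofReal δ := by
    rw [hdiv, ENNReal.ofReal_mul (by linarith)]
  calc ENNReal.ofReal (Real.exp ε') * P X' (T k)
        + ENNReal.ofReal ((1 - Real.exp ε' / Real.exp ε) * δ)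
      ≤ ENNReal.ofReal r * P X (T k) + ENNReal.ofReal (1 - r) * ENNReal.ofReal δ :=
        add_le_add hpart1 hpart2.le
    _ < ENNReal.ofReal r * P X (T k) + ENNReal.ofReal (1 - r) * P X (T k) := by
        refine ENNReal.add_lt_add_left
          (ENNReal.mul_ne_top ENNReal.ofReal_ne_top hfin) ?_
        exact (ENNReal.mul_lt_mul_iff_right (ENNReal.ofReal_pos.2 (by linarith)).ne'
          ENNReal.ofReal_ne_top).2 hk
    _ = P X (T k) := by
        rw [← add_mul, ← ENNReal.ofReal_add hr0.le (by linarith)]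
        simp
end
end

section
/- Let X and X' be n×p real matrices that differ only in their first row, let Δ = X' − X, and consider the mechanism Y(X) = X + C where C is an n×p matrix of i.i.d. N(0, σ²) entries. Let S̄_{X,X'} = {y : p_{Y(X)}(y) > e^ε p_{Y(X')}(y)}, where p_{Y(X)} is the density of Y(X). Then the condition P[Y(X) ∈ S̄_{X,X'}] ≤ δ holds if and only if γ̄_δ ≤ σε/‖Δ‖ − ‖Δ‖/(2σ), where γ̄_δ is the upper δ-quantile of the standard normal distribution N(0,1) and ‖·‖ is the Frobenius norm. -/
open MeasureTheory ProbabilityTheory Real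

noncomputable section

/-- The density at `y` of the Gaussian mechanism `X + C`, where `C` has
i.i.d. N(0, σ²) entries: `(2πσ²)^{−np/2} exp(−‖y − X‖²/(2σ²))`. -/
def gaussDens {n p : ℕ} (σ : ℝ) (X y : Mat n p) : ℝ :=
  (2 * π * σ ^ 2) ^ (-(n * p : ℝ) / 2) * Real.exp (-(frob (y - X) ^ 2) / (2 * σ ^ 2))
/-- The law of the mechanism `Y(X) = X + C` (setting (A)). -/
def lawA {n p : ℕ} (σ : ℝ) (X : Mat n p) : Measure (Mat n p) :=
  (gaussNoise n p σ).map (fun c => X + c)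

open scoped NNReal ENNReal

section Helpers

lemma conv_pdf_real (v w : ℝ≥0) (hv : v ≠ 0) (hw : w ≠ 0) (y : ℝ) :
    ∫ x, gaussianPDFReal 0 v x * gaussianPDFReal x w y = gaussianPDFReal 0 (v + w) y := by
  have hv' : (0:ℝ) < v := lt_of_le_of_ne v.2 (by exact_mod_cast Ne.symm hv)
  have hw' : (0:ℝ) < w := lt_of_le_of_ne w.2 (by exact_mod_cast Ne.symm hw)
  have hvne : (v:ℝ) ≠ 0 := ne_of_gt hv'
  have hwne : (w:ℝ) ≠ 0 := ne_of_gt hw'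
  have hvw : (0:ℝ) < (v:ℝ) + w := by positivity
  have hvwne : (v:ℝ) + w ≠ 0 := ne_of_gt hvw
  have hb' : 0 < ((v:ℝ) + w) / (2 * v * w) := by positivity
  have hexp : ∀ x, gaussianPDFReal 0 v x * gaussianPDFReal x w y
      = ((√(2 * π * v))⁻¹ * (√(2 * π * w))⁻¹ * rexp (-(y^2) / (2 * ((v:ℝ) + w))))
        * rexp (-(((v:ℝ) + w) / (2 * v * w)) * (x - (v:ℝ) * y / ((v:ℝ) + w))^2) := by
    intro x
    simp only [gaussianPDFReal]
    have key : rexp (-(x - 0)^2 / (2*(v:ℝ))) * rexp (-(y - x)^2 / (2*(w:ℝ)))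
        = rexp (-(y^2) / (2*((v:ℝ)+w)))
          * rexp (-(((v:ℝ) + w) / (2 * v * w)) * (x - (v:ℝ) * y / ((v:ℝ) + w))^2) := by
      rw [← Real.exp_add, ← Real.exp_add]
      congr 1
      field_simp
      ring
    calc (√(2 * π * (v:ℝ)))⁻¹ * rexp (-(x - 0)^2 / (2*(v:ℝ)))
          * ((√(2 * π * (w:ℝ)))⁻¹ * rexp (-(y - x)^2 / (2*(w:ℝ))))
        = (√(2 * π * (v:ℝ)))⁻¹ * (√(2 * π * (w:ℝ)))⁻¹
          * (rexp (-(x - 0)^2 / (2*(v:ℝ))) * rexp (-(y - x)^2 / (2*(w:ℝ)))) := by ring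
      _ = _ := by rw [key]; ring
  rw [integral_congr_ae (ae_of_all _ hexp), integral_const_mul,
    integral_sub_right_eq_self (fun x => rexp (-(((v:ℝ) + w) / (2 * v * w)) * x^2))
      ((v:ℝ) * y / ((v:ℝ) + w)), integral_gaussian]
  simp only [gaussianPDFReal]
  rw [show π / (((v:ℝ) + w) / (2 * v * w)) = (2*π*(v:ℝ)) * (2*π*(w:ℝ)) / (2*π*((v:ℝ)+w)) by
      field_simp,
    Real.sqrt_div (by positivity), Real.sqrt_mul (by positivity)]
  have h1 : (0:ℝ) < √(2*π*(v:ℝ)) := Real.sqrt_pos.2 (by positivity)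
  have h2 : (0:ℝ) < √(2*π*(w:ℝ)) := Real.sqrt_pos.2 (by positivity)
  have h3 : (0:ℝ) < √(2*π*((v:ℝ)+w)) := Real.sqrt_pos.2 (by positivity)
  rw [NNReal.coe_add]
  field_simp
  rw [sub_zero, ← Real.sqrt_mul (by positivity), ← Real.sqrt_mul (by positivity)]
  ring_nf

lemma conv_pdf_integrable (v w : ℝ≥0) (hv : v ≠ 0) (hw : w ≠ 0) (y : ℝ) :
    Integrable (fun x => gaussianPDFReal 0 v x * gaussianPDFReal x w y) := by
  have hv' : (0:ℝ) < v := lt_of_le_of_ne v.2 (by exact_mod_cast Ne.symm hv)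
  have hw' : (0:ℝ) < w := lt_of_le_of_ne w.2 (by exact_mod_cast Ne.symm hw)
  have hvne : (v:ℝ) ≠ 0 := ne_of_gt hv'
  have hwne : (w:ℝ) ≠ 0 := ne_of_gt hw'
  have hvw : (0:ℝ) < (v:ℝ) + w := by positivity
  have hvwne : (v:ℝ) + w ≠ 0 := ne_of_gt hvw
  have hb' : 0 < ((v:ℝ) + w) / (2 * v * w) := by positivity
  have hexp : ∀ x, gaussianPDFReal 0 v x * gaussianPDFReal x w y
      = ((√(2 * π * v))⁻¹ * (√(2 * π * w))⁻¹ * rexp (-(y^2) / (2 * ((v:ℝ) + w))))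
        * rexp (-(((v:ℝ) + w) / (2 * v * w)) * (x - (v:ℝ) * y / ((v:ℝ) + w))^2) := by
    intro x
    simp only [gaussianPDFReal]
    have key : rexp (-(x - 0)^2 / (2*(v:ℝ))) * rexp (-(y - x)^2 / (2*(w:ℝ)))
        = rexp (-(y^2) / (2*((v:ℝ)+w)))
          * rexp (-(((v:ℝ) + w) / (2 * v * w)) * (x - (v:ℝ) * y / ((v:ℝ) + w))^2) := by
      rw [← Real.exp_add, ← Real.exp_add]
      congr 1
      field_simp
      ring
    calc (√(2 * π * (v:ℝ)))⁻¹ * rexp (-(x - 0)^2 / (2*(v:ℝ)))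
          * ((√(2 * π * (w:ℝ)))⁻¹ * rexp (-(y - x)^2 / (2*(w:ℝ))))
        = (√(2 * π * (v:ℝ)))⁻¹ * (√(2 * π * (w:ℝ)))⁻¹
          * (rexp (-(x - 0)^2 / (2*(v:ℝ))) * rexp (-(y - x)^2 / (2*(w:ℝ)))) := by ring
      _ = _ := by rw [key]; ring
  rw [funext hexp]
  exact ((integrable_exp_neg_mul_sq hb').comp_sub_right ((v:ℝ) * y / ((v:ℝ) + w))).const_mul _

lemma conv_pdf (v w : ℝ≥0) (hv : v ≠ 0) (hw : w ≠ 0) (y : ℝ) :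
    ∫⁻ x, gaussianPDF 0 v x * gaussianPDF x w y = gaussianPDF 0 (v + w) y := by
  simp_rw [gaussianPDF, ← ENNReal.ofReal_mul (gaussianPDFReal_nonneg 0 v _)]
  rw [← ofReal_integral_eq_lintegral_ofReal (conv_pdf_integrable v w hv hw y)
    (ae_of_all _ fun x => mul_nonneg (gaussianPDFReal_nonneg _ _ _) (gaussianPDFReal_nonneg _ _ _)),
    conv_pdf_real v w hv hw y]

lemma measurable_pdf_pair (w : ℝ≥0) : Measurable (fun q : ℝ × ℝ => gaussianPDF q.1 w q.2) := by
  unfold gaussianPDF gaussianPDFReal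
  fun_prop

lemma gaussianReal_prod_add (v w : ℝ≥0) :
    ((gaussianReal 0 v).prod (gaussianReal 0 w)).map (fun q : ℝ × ℝ => q.1 + q.2)
      = gaussianReal 0 (v + w) := by
  by_cases hv : v = 0
  · subst hv
    rw [gaussianReal_zero_var, Measure.dirac_prod, Measure.map_map (by fun_prop) (by fun_prop)]
    have : ((fun q : ℝ × ℝ => q.1 + q.2) ∘ Prod.mk (0:ℝ)) = fun x : ℝ => (0:ℝ) + x := rfl
    rw [this, gaussianReal_map_const_add, zero_add, zero_add]
  by_cases hw : w = 0
  · subst hw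
    rw [gaussianReal_zero_var, Measure.prod_dirac, Measure.map_map (by fun_prop) (by fun_prop)]
    have : ((fun q : ℝ × ℝ => q.1 + q.2) ∘ (fun x : ℝ => (x, (0:ℝ)))) = fun x : ℝ => x + (0:ℝ) :=
      rfl
    rw [this, gaussianReal_map_add_const, add_zero, add_zero]
  have hvw : v + w ≠ 0 := by simp [hv]
  ext s hs
  rw [Measure.map_apply (by fun_prop) hs,
    Measure.prod_apply (hs.preimage (by fun_prop))]
  have key : ∀ x : ℝ, gaussianReal 0 w (Prod.mk x ⁻¹' ((fun q : ℝ × ℝ => q.1 + q.2) ⁻¹' s))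
      = ∫⁻ y in s, gaussianPDF x w y := by
    intro x
    have hpre : Prod.mk x ⁻¹' ((fun q : ℝ × ℝ => q.1 + q.2) ⁻¹' s) = (fun y => x + y) ⁻¹' s := rfl
    rw [hpre, ← Measure.map_apply (by fun_prop) hs, gaussianReal_map_const_add, zero_add,
      gaussianReal_apply _ hw]
  simp_rw [key]
  rw [gaussianReal_of_var_ne_zero 0 hv,
    lintegral_withDensity_eq_lintegral_mul _ (measurable_gaussianPDF 0 v)
      ((measurable_pdf_pair w).lintegral_prod_right')]
  have swap : ∫⁻ x, (gaussianPDF 0 v * fun x => ∫⁻ y in s, gaussianPDF x w y) x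
      = ∫⁻ y in s, ∫⁻ x, gaussianPDF 0 v x * gaussianPDF x w y := by
    have h1 : ∀ x : ℝ, gaussianPDF 0 v x * ∫⁻ y in s, gaussianPDF x w y
        = ∫⁻ y in s, gaussianPDF 0 v x * gaussianPDF x w y := fun x =>
      (lintegral_const_mul _ (measurable_gaussianPDF x w)).symm
    simp only [Pi.mul_apply]
    simp_rw [h1]
    exact lintegral_lintegral_swap
      (((measurable_gaussianPDF 0 v).comp measurable_fst).mul (measurable_pdf_pair w)).aemeasurable
  rw [swap]
  simp_rw [conv_pdf v w hv hw]
  rw [gaussianReal_apply _ hvw]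

lemma pi_map_gauss : ∀ {m : ℕ} (Ω : Fin m → Type) [∀ i, MeasurableSpace (Ω i)]
    (μ : ∀ i, Measure (Ω i)) [∀ i, IsProbabilityMeasure (μ i)]
    (f : ∀ i, Ω i → ℝ) (_ : ∀ i, Measurable (f i)) (v : Fin m → ℝ≥0)
    (_ : ∀ i, (μ i).map (f i) = gaussianReal 0 (v i)),
    (Measure.pi μ).map (fun c => ∑ i, f i (c i)) = gaussianReal 0 (∑ i, v i) := by
  intro m
  induction m with
  | zero =>
    intro Ω _ μ _ f hf v h
    simp only [Finset.univ_eq_empty, Finset.sum_empty, gaussianReal_zero_var]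
    rw [Measure.map_const, measure_univ, one_smul]
  | succ m ih =>
    intro Ω _ μ _ f hf v h
    have hS : Measurable (fun c : ∀ j, Ω ((0 : Fin (m+1)).succAbove j) =>
        ∑ j, f ((0 : Fin (m+1)).succAbove j) (c j)) :=
      Finset.measurable_sum _ fun j _ => (hf _).comp (measurable_pi_apply j)
    have hg : Measurable (fun q : Ω 0 × ∀ j, Ω ((0 : Fin (m+1)).succAbove j) =>
        f 0 q.1 + ∑ j, f ((0 : Fin (m+1)).succAbove j) (q.2 j)) :=
      ((hf 0).comp measurable_fst).add (hS.comp measurable_snd)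
    have hfun : (fun c : ∀ j, Ω j => ∑ i, f i (c i))
        = (fun q : Ω 0 × ∀ j, Ω ((0 : Fin (m+1)).succAbove j) =>
            f 0 q.1 + ∑ j, f ((0 : Fin (m+1)).succAbove j) (q.2 j))
          ∘ (MeasurableEquiv.piFinSuccAbove Ω 0) := by
      ext c
      simp only [Function.comp_apply, MeasurableEquiv.piFinSuccAbove_apply]
      exact Fin.sum_univ_succAbove (fun i => f i (c i)) 0
    rw [hfun, ← Measure.map_map hg (MeasurableEquiv.piFinSuccAbove Ω 0).measurable,
      (measurePreserving_piFinSuccAbove μ 0).map_eq]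
    have hg2 : (fun q : Ω 0 × ∀ j, Ω ((0 : Fin (m+1)).succAbove j) =>
            f 0 q.1 + ∑ j, f ((0 : Fin (m+1)).succAbove j) (q.2 j))
        = (fun q : ℝ × ℝ => q.1 + q.2)
          ∘ Prod.map (f 0) (fun c => ∑ j, f ((0 : Fin (m+1)).succAbove j) (c j)) := rfl
    rw [hg2, ← Measure.map_map (by fun_prop) ((hf 0).prodMap hS),
      ← Measure.map_prod_map _ _ (hf 0) hS, h 0,
      ih _ _ _ (fun j => hf _) _ (fun j => h _), gaussianReal_prod_add,
      Fin.sum_univ_succAbove v 0]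

lemma gaussNoise_map_L {n p : ℕ} (σ : ℝ) (Δ : Mat n p) :
    (gaussNoise n p σ).map (fun c : Mat n p => ∑ i, ∑ j, Δ i j * c i j)
      = gaussianReal 0 (∑ i, ∑ j,
          ((⟨(Δ i j)^2, sq_nonneg _⟩ : ℝ≥0) * (⟨σ^2, sq_nonneg σ⟩ : ℝ≥0))) := by
  unfold gaussNoise
  haveI : ∀ i : Fin n, IsProbabilityMeasure (Measure.pi fun _ : Fin p => gaussianReal 0 ⟨σ^2, sq_nonneg σ⟩) :=
    fun _ => @Measure.pi.instIsProbabilityMeasure _ _ _ _ _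
      (fun _ => instIsProbabilityMeasureGaussianReal _ _)
  refine @pi_map_gauss _ (fun _ => Fin p → ℝ) _
    (fun _ => Measure.pi fun _ => gaussianReal 0 ⟨σ^2, sq_nonneg σ⟩) this
    (fun i => fun r => ∑ j, Δ i j * r j)
    (fun i => Finset.measurable_sum _ fun j _ => (measurable_pi_apply j).const_mul _)
    (fun i => ∑ j, (⟨(Δ i j)^2, sq_nonneg _⟩ : ℝ≥0) * (⟨σ^2, sq_nonneg σ⟩ : ℝ≥0))
    (fun i => ?_)
  refine @pi_map_gauss _ (fun _ => ℝ) _ (fun _ => gaussianReal 0 ⟨σ^2, sq_nonneg σ⟩)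
    (fun _ => instIsProbabilityMeasureGaussianReal _ _)
    (fun j => fun x => Δ i j * x)
    (fun j => measurable_id.const_mul _)
    (fun j => (⟨(Δ i j)^2, sq_nonneg _⟩ : ℝ≥0) * (⟨σ^2, sq_nonneg σ⟩ : ℝ≥0))
    (fun j => ?_)
  exact (gaussianReal_map_const_mul (Δ i j)).trans (by rw [mul_zero]; rfl)

lemma quantile_iff (γ u δ : ℝ) (hγ : gaussianReal 0 1 (Set.Ioi γ) = ENNReal.ofReal δ) :
    gaussianReal 0 1 (Set.Ioi u) ≤ ENNReal.ofReal δ ↔ γ ≤ u := by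
  constructor
  · intro hle
    by_contra hne
    push_neg at hne
    have hsplit : Set.Ioi u = Set.Ioc u γ ∪ Set.Ioi γ := (Set.Ioc_union_Ioi_eq_Ioi hne.le).symm
    rw [hsplit, measure_union (Set.Ioc_disjoint_Ioi le_rfl) measurableSet_Ioi, hγ] at hle
    have hpos : 0 < gaussianReal 0 1 (Set.Ioc u γ) := by
      rw [pos_iff_ne_zero]
      intro h0
      have hvol := (gaussianReal_absolutelyContinuous' 0 one_ne_zero) h0
      rw [Real.volume_Ioc] at hvol
      simp only [ENNReal.ofReal_eq_zero] at hvol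
      linarith
    have := ENNReal.lt_add_right (a := ENNReal.ofReal δ) ENNReal.ofReal_ne_top hpos.ne'
    rw [add_comm] at this
    exact absurd (lt_of_lt_of_le this hle) (lt_irrefl _)
  · intro hle
    rw [← hγ]
    exact measure_mono (Set.Ioi_subset_Ioi hle)

lemma gauss_Iio_neg (u : ℝ) : gaussianReal 0 1 (Set.Iio (-u)) = gaussianReal 0 1 (Set.Ioi u) := by
  have hneg : (gaussianReal 0 1).map (fun x : ℝ => -x) = gaussianReal 0 1 := by
    rw [show (fun x : ℝ => -x) = fun x : ℝ => (-1 : ℝ) * x from funext fun x => by ring,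
      gaussianReal_map_const_mul]
    congr 1
    · ring
    · ext
      push_cast
      norm_num
  conv_lhs => rw [← hneg]
  rw [Measure.map_apply measurable_neg measurableSet_Iio]
  congr 1
  ext x
  simp only [Set.mem_preimage, Set.mem_Iio, Set.mem_Ioi]
  constructor <;> intro <;> linarith

end Helpers

/-- Let `X, X'` differ only in their first row, `Δ = X' − X ≠ 0`, and
consider the mechanism `Y(X) = X + C` with `C` i.i.d. N(0, σ²) entries, whose density
is `gaussDens σ X`. Then `P[Y(X) ∈ S̄_{X,X'}] ≤ δ` holds if and only if
`γ̄_δ ≤ σε/‖Δ‖ − ‖Δ‖/(2σ)`, where `γ̄_δ` is the upper δ-quantile of N(0,1). -/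
theorem stmt6 {n p : ℕ} (hn : 0 < n) (σ ε δ γ : ℝ) (hσ : 0 < σ)
    (hγ : gaussianReal 0 1 (Set.Ioi γ) = ENNReal.ofReal δ)
    (X X' : Mat n p)
    (hrow : ∀ k : Fin n, k ≠ ⟨0, hn⟩ → X k = X' k)
    (hne : X ≠ X') :
    lawA σ X {y | gaussDens σ X y > Real.exp ε * gaussDens σ X' y}
        ≤ ENNReal.ofReal δ ↔
      γ ≤ σ * ε / frob (X' - X) - frob (X' - X) / (2 * σ) := by
  classical
  set Δ : Mat n p := X' - X with hΔ
  set d : ℝ := frob Δ with hd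
  -- positivity of d
  have hsum_pos : 0 < ∑ i, ∑ j, Δ i j ^ 2 := by
    obtain ⟨i, hi⟩ : ∃ i, X i ≠ X' i := by
      by_contra hc
      push_neg at hc
      exact hne (funext hc)
    obtain ⟨j, hj⟩ : ∃ j, X i j ≠ X' i j := by
      by_contra hc
      push_neg at hc
      exact hi (funext hc)
    have hterm : 0 < Δ i j ^ 2 := by
      have : Δ i j ≠ 0 := by
        simp only [hΔ, Pi.sub_apply]
        intro h0
        apply hj
        linarith
      positivity
    refine Finset.sum_pos' (fun i _ => Finset.sum_nonneg fun j _ => sq_nonneg _) ?_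
    exact ⟨i, Finset.mem_univ i, Finset.sum_pos' (fun j _ => sq_nonneg _)
      ⟨j, Finset.mem_univ j, hterm⟩⟩
  have hdpos : 0 < d := Real.sqrt_pos.2 hsum_pos
  have hdsq : d ^ 2 = ∑ i, ∑ j, Δ i j ^ 2 := Real.sq_sqrt hsum_pos.le
  set L : Mat n p → ℝ := fun c => ∑ i, ∑ j, Δ i j * c i j with hL
  have hLmeas : Measurable L := by
    rw [hL]
    fun_prop
  set t : ℝ := (d ^ 2 - 2 * σ ^ 2 * ε) / 2 with ht
  -- measurability of density
  have hdens : ∀ Z : Mat n p, Measurable (fun y => gaussDens σ Z y) := by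
    intro Z
    unfold gaussDens frob
    fun_prop
  have hSmeas : MeasurableSet {y : Mat n p | gaussDens σ X y > Real.exp ε * gaussDens σ X' y} :=
    measurableSet_lt ((hdens X').const_mul _) (hdens X)
  -- preimage computation
  have hsq : ∀ M : Mat n p, frob M ^ 2 = ∑ i, ∑ j, M i j ^ 2 := fun M =>
    Real.sq_sqrt (Finset.sum_nonneg fun i _ => Finset.sum_nonneg fun j _ => sq_nonneg _)
  have hpre : (fun c : Mat n p => X + c) ⁻¹'
      {y | gaussDens σ X y > Real.exp ε * gaussDens σ X' y} = {c | L c < t} := by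
    ext c
    simp only [Set.mem_preimage, Set.mem_setOf_eq, gt_iff_lt, gaussDens]
    have hK : (0:ℝ) < (2 * π * σ ^ 2) ^ (-(n * p : ℝ) / 2) :=
      Real.rpow_pos_of_pos (by positivity) _
    have hrw : Real.exp ε * ((2 * π * σ ^ 2) ^ (-(n * p : ℝ) / 2)
          * Real.exp (-(frob (X + c - X') ^ 2) / (2 * σ ^ 2)))
        = (2 * π * σ ^ 2) ^ (-(n * p : ℝ) / 2)
          * Real.exp (ε + -(frob (X + c - X') ^ 2) / (2 * σ ^ 2)) := by
      rw [Real.exp_add]; ring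
    rw [hrw, show X + c - X = c from by rw [add_sub_cancel_left], mul_lt_mul_iff_right₀ hK,
      Real.exp_lt_exp]
    have hexpand : frob (X + c - X') ^ 2 = frob c ^ 2 - 2 * L c + d ^ 2 := by
      rw [hsq, hsq, hd, hsq]
      have hentry : ∀ i j, (X + c - X') i j ^ 2
          = c i j ^ 2 - 2 * (Δ i j * c i j) + Δ i j ^ 2 := by
        intro i j
        simp only [hΔ, Pi.add_apply, Pi.sub_apply]
        ring
      simp_rw [hentry, Finset.sum_add_distrib, Finset.sum_sub_distrib, hL, Finset.mul_sum]
    rw [hexpand]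
    have hs2 : (0:ℝ) < 2 * σ ^ 2 := by positivity
    constructor
    · intro hlt
      have h1 : ε < (d ^ 2 - 2 * L c) / (2 * σ ^ 2) := by
        have : -(frob c ^ 2 - 2 * L c + d ^ 2) / (2 * σ ^ 2)
            = -(frob c ^ 2) / (2 * σ ^ 2) - (d ^ 2 - 2 * L c) / (2 * σ ^ 2) := by ring
        rw [this] at hlt
        linarith
      have h2 := (lt_div_iff₀ hs2).mp h1
      rw [ht]
      linarith
    · intro hlt
      have h2 : ε * (2 * σ ^ 2) < d ^ 2 - 2 * L c := by rw [ht] at hlt; linarith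
      have h1 := (lt_div_iff₀ hs2).mpr h2
      have : -(frob c ^ 2 - 2 * L c + d ^ 2) / (2 * σ ^ 2)
          = -(frob c ^ 2) / (2 * σ ^ 2) - (d ^ 2 - 2 * L c) / (2 * σ ^ 2) := by ring
      rw [this]
      linarith
  -- rewrite the law
  have hXadd : Measurable (fun c : Mat n p => X + c) := by fun_prop
  rw [lawA, Measure.map_apply hXadd hSmeas, hpre]
  have hset : {c : Mat n p | L c < t} = L ⁻¹' Set.Iio t := rfl
  rw [hset, ← Measure.map_apply hLmeas measurableSet_Iio, hL, gaussNoise_map_L σ Δ]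
  -- identify the variance
  set V : ℝ≥0 := ∑ i, ∑ j, ((⟨(Δ i j)^2, sq_nonneg _⟩ : ℝ≥0) * (⟨σ^2, sq_nonneg σ⟩ : ℝ≥0))
    with hV
  have hVcoe : (V : ℝ) = (σ * d) ^ 2 := by
    rw [hV]
    simp only [NNReal.coe_sum, NNReal.coe_mul, NNReal.coe_mk]
    rw [Finset.sum_congr rfl fun i _ => (NNReal.coe_sum (s := Finset.univ) (f := fun j => ((⟨(Δ i j)^2, sq_nonneg _⟩ : ℝ≥0) * (⟨σ^2, sq_nonneg σ⟩ : ℝ≥0))))]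
    refine (Finset.sum_congr rfl fun i _ => Finset.sum_congr rfl fun j _ => (rfl : _ = Δ i j ^ 2 * σ ^ 2)).trans ?_
    rw [show ∑ i, ∑ j, (Δ i j ^ 2 * σ ^ 2) = (∑ i, ∑ j, Δ i j ^ 2) * σ ^ 2 from by
      rw [Finset.sum_mul]; exact Finset.sum_congr rfl fun i _ => (Finset.sum_mul ..).symm]
    rw [← hdsq]
    ring
  have hσd : (0:ℝ) < σ * d := by positivity
  have hmap : (gaussianReal 0 1).map (fun x => (σ * d) * x) = gaussianReal 0 V := by
    rw [gaussianReal_map_const_mul, mul_zero]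
    congr 1
    ext
    push_cast
    rw [hVcoe]
    ring
  rw [← hmap, Measure.map_apply (by fun_prop : Measurable fun x : ℝ => σ * d * x)
    measurableSet_Iio]
  have hpre2 : (fun x => (σ * d) * x) ⁻¹' Set.Iio t = Set.Iio (t / (σ * d)) := by
    ext x
    simp only [Set.mem_preimage, Set.mem_Iio]
    rw [← lt_div_iff₀' hσd]
  rw [hpre2]
  have hu : t / (σ * d) = -(σ * ε / d - d / (2 * σ)) := by
    rw [ht]
    field_simp
    ring
  rw [hu, gauss_Iio_neg, quantile_iff γ _ δ hγ, hd, hΔ]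
end
end

section
/- Let 0 < δ < 1/2 and 0 < ε ≤ 1, and let X, X' be n×p real matrices that differ only in their first row, with Δ = X' − X ≠ 0. Consider the mechanism Y(X) = X + C where C is an n×p matrix of i.i.d. N(0, σ²) entries, and let S̄_{X,X'} = {y : p_{Y(X)}(y) > e^ε p_{Y(X')}(y)}. If σ ≥ (‖Δ‖ γ̄_δ / ε)·(1 + 1/(2 γ̄_δ²)), then P[Y(X) ∈ S̄_{X,X'}] ≤ δ, where γ̄_δ is the upper δ-quantile of N(0,1) and ‖·‖ is the Frobenius norm. -/
open MeasureTheory ProbabilityTheory Real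
open scoped NNReal ENNReal

noncomputable section

lemma gauss_pdf_conv (v1 v2 : ℝ≥0) (h1 : v1 ≠ 0) (h2 : v2 ≠ 0) (y : ℝ) :
    ∫ x, gaussianPDFReal 0 v1 x * gaussianPDFReal 0 v2 (y - x)
      = gaussianPDFReal 0 (v1 + v2) y := by
  have ha : (0:ℝ) < v1 := lt_of_le_of_ne v1.coe_nonneg (by exact_mod_cast (Ne.symm h1))
  have hb : (0:ℝ) < v2 := lt_of_le_of_ne v2.coe_nonneg (by exact_mod_cast (Ne.symm h2))
  set a : ℝ := (v1:ℝ)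
  set b : ℝ := (v2:ℝ)
  have hab : (0:ℝ) < a + b := by linarith
  set k : ℝ := (a + b) / (2 * a * b) with hk
  have hkpos : 0 < k := by positivity
  set m : ℝ := a * y / (a + b) with hm
  have key : ∀ x : ℝ, gaussianPDFReal 0 v1 x * gaussianPDFReal 0 v2 (y - x)
      = ((√(2 * π * a))⁻¹ * (√(2 * π * b))⁻¹ * rexp (-y^2 / (2 * (a + b))))
        * rexp (-k * (x - m)^2) := by
    intro x
    have hexp : -x^2 / (2*a) + -(y-x)^2 / (2*b) = -y^2 / (2*(a+b)) + -k*(x-m)^2 := by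
      rw [hk, hm]; field_simp; ring
    simp only [gaussianPDFReal, sub_zero]
    calc (√(2 * π * a))⁻¹ * rexp (-x^2 / (2*a)) * ((√(2 * π * b))⁻¹ * rexp (-(y-x)^2 / (2*b)))
        = (√(2 * π * a))⁻¹ * (√(2 * π * b))⁻¹ * rexp (-x^2 / (2*a) + -(y-x)^2 / (2*b)) := by
          rw [Real.exp_add]; ring
      _ = _ := by rw [hexp, Real.exp_add]; ring
  rw [integral_congr_ae (ae_of_all _ key), integral_const_mul]
  rw [show (fun x : ℝ => rexp (-k * (x - m)^2)) = fun x => (fun z => rexp (-k * z^2)) (x - m) from rfl]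
  rw [integral_sub_right_eq_self (fun z => rexp (-k * z^2)) m, integral_gaussian]
  rw [gaussianPDFReal, sub_zero]
  rw [mul_comm, ← mul_assoc]
  congr 1
  · rw [← mul_inv, ← Real.sqrt_mul (by positivity), ← Real.sqrt_inv,
      ← Real.sqrt_mul (by positivity)]
    rw [show π / k * (2 * π * a * (2 * π * b))⁻¹ = (2 * π * (a + b))⁻¹ by
      rw [hk]; field_simp]
    rw [Real.sqrt_inv]
    norm_num [NNReal.coe_add]
    rfl

lemma gaussianPDFReal_le (v : ℝ≥0) (x : ℝ) :
    gaussianPDFReal 0 v x ≤ (√(2 * π * v))⁻¹ := by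
  rw [gaussianPDFReal]
  have h1 : rexp (-(x - 0)^2 / (2 * v)) ≤ 1 := by
    rw [Real.exp_le_one_iff]
    apply div_nonpos_of_nonpos_of_nonneg
    · simp [sq_nonneg]
    · positivity
  calc (√(2 * π * v))⁻¹ * rexp (-(x - 0)^2 / (2 * v)) ≤ (√(2 * π * v))⁻¹ * 1 := by
        apply mul_le_mul_of_nonneg_left h1 (by positivity)
    _ = _ := mul_one _

lemma gauss_lconv (v1 v2 : ℝ≥0) (h1 : v1 ≠ 0) (h2 : v2 ≠ 0) (z : ℝ) :
    ∫⁻ x, gaussianPDF 0 v1 x * gaussianPDF 0 v2 (z - x) = gaussianPDF 0 (v1 + v2) z := by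
  have hint : Integrable (fun x => gaussianPDFReal 0 v1 x * gaussianPDFReal 0 v2 (z - x)) := by
    have h := (integrable_gaussianPDFReal 0 v1).bdd_mul
      (f := fun x => gaussianPDFReal 0 v2 (z - x))
      (((measurable_gaussianPDFReal 0 v2).comp (measurable_const.sub measurable_id)).aestronglyMeasurable)
      (c := (√(2 * π * v2))⁻¹) (ae_of_all _ fun x => by
        rw [Real.norm_of_nonneg (gaussianPDFReal_nonneg _ _ _)]
        exact gaussianPDFReal_le v2 _)
    simpa [mul_comm] using h
  simp only [gaussianPDF]
  simp_rw [← ENNReal.ofReal_mul (gaussianPDFReal_nonneg 0 v1 _)]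
  rw [← ofReal_integral_eq_lintegral_ofReal hint
    (ae_of_all _ fun x => mul_nonneg (gaussianPDFReal_nonneg _ _ _) (gaussianPDFReal_nonneg _ _ _)),
    gauss_pdf_conv v1 v2 h1 h2 z]

lemma gauss_conv (v1 v2 : ℝ≥0) :
    ((gaussianReal 0 v1).prod (gaussianReal 0 v2)).map (fun q : ℝ × ℝ => q.1 + q.2)
      = gaussianReal 0 (v1 + v2) := by
  by_cases h1 : v1 = 0
  · subst h1
    rw [gaussianReal_zero_var, Measure.dirac_prod,
      Measure.map_map measurable_add measurable_prodMk_left]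
    have : ((fun q : ℝ × ℝ => q.1 + q.2) ∘ Prod.mk 0) = id := by
      funext y; simp
    rw [this, Measure.map_id, zero_add]
  by_cases h2 : v2 = 0
  · subst h2
    rw [gaussianReal_zero_var, Measure.prod_dirac,
      Measure.map_map measurable_add measurable_prodMk_right]
    have : ((fun q : ℝ × ℝ => q.1 + q.2) ∘ fun x => (x, (0:ℝ))) = id := by
      funext y; simp
    rw [this, Measure.map_id, add_zero]
  have hv : v1 + v2 ≠ 0 := by positivity
  rw [gaussianReal_of_var_ne_zero 0 h1, gaussianReal_of_var_ne_zero 0 h2,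
    gaussianReal_of_var_ne_zero 0 hv]
  ext s hs
  rw [Measure.map_apply measurable_add hs, withDensity_apply _ hs,
    Measure.prod_apply (hs.preimage measurable_add)]
  have hmem : ∀ x y : ℝ, (Prod.mk x ⁻¹' ((fun q : ℝ × ℝ => q.1 + q.2) ⁻¹' s))
      = (fun y => x + y) ⁻¹' s := fun x y => rfl
  have inner : ∀ x : ℝ,
      (volume.withDensity (gaussianPDF 0 v2)) (Prod.mk x ⁻¹' ((fun q : ℝ × ℝ => q.1 + q.2) ⁻¹' s))
        = ∫⁻ z, s.indicator (fun z => gaussianPDF 0 v2 (z - x)) z := by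
    intro x
    rw [hmem x 0, withDensity_apply _ (hs.preimage (measurable_const_add x)),
      ← lintegral_indicator (hs.preimage (measurable_const_add x))]
    have hpt : ∀ y, ((fun y => x + y) ⁻¹' s).indicator (gaussianPDF 0 v2) y
        = s.indicator (fun z => gaussianPDF 0 v2 (z - x)) (x + y) := by
      intro y
      by_cases hy : x + y ∈ s
      · rw [Set.indicator_of_mem hy, Set.indicator_of_mem (by exact hy)]
        simp
      · rw [Set.indicator_of_notMem hy, Set.indicator_of_notMem (by exact hy)]
    rw [lintegral_congr hpt]
    exact lintegral_add_left_eq_self (s.indicator fun z => gaussianPDF 0 v2 (z - x)) x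
  rw [lintegral_congr inner]
  have hFmeas : Measurable (fun p : ℝ × ℝ => s.indicator (fun z => gaussianPDF 0 v2 (z - p.1)) p.2) := by
    have : (fun p : ℝ × ℝ => s.indicator (fun z => gaussianPDF 0 v2 (z - p.1)) p.2)
        = fun p => s.indicator (fun _ => (1:ℝ≥0∞)) p.2 * gaussianPDF 0 v2 (p.2 - p.1) := by
      funext p
      by_cases hp : p.2 ∈ s
      · rw [Set.indicator_of_mem hp, Set.indicator_of_mem hp, one_mul]
      · rw [Set.indicator_of_notMem hp, Set.indicator_of_notMem hp, zero_mul]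
    rw [this]
    exact ((measurable_const.indicator hs).comp measurable_snd).mul
      ((measurable_gaussianPDF 0 v2).comp (measurable_snd.sub measurable_fst))
  have hgmeas : Measurable fun x : ℝ => ∫⁻ z, s.indicator (fun z => gaussianPDF 0 v2 (z - x)) z :=
    hFmeas.lintegral_prod_right'
  rw [lintegral_withDensity_eq_lintegral_mul _ (measurable_gaussianPDF 0 v1) hgmeas]
  simp only [Pi.mul_apply]
  have hpull : ∀ x : ℝ, gaussianPDF 0 v1 x * ∫⁻ z, s.indicator (fun z => gaussianPDF 0 v2 (z - x)) z
      = ∫⁻ z, gaussianPDF 0 v1 x * s.indicator (fun z => gaussianPDF 0 v2 (z - x)) z := by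
    intro x
    rw [← lintegral_const_mul _ (by exact hFmeas.comp (measurable_prodMk_left (x := x)))]
  rw [lintegral_congr hpull]
  rw [lintegral_lintegral_swap
    ((((measurable_gaussianPDF 0 v1).comp measurable_fst).mul hFmeas).aemeasurable)]
  have hind : ∀ z : ℝ, ∫⁻ x, gaussianPDF 0 v1 x * s.indicator (fun z => gaussianPDF 0 v2 (z - x)) z
      = s.indicator (gaussianPDF 0 (v1 + v2)) z := by
    intro z
    by_cases hz : z ∈ s
    · simp only [Set.indicator_of_mem hz]
      exact gauss_lconv v1 v2 h1 h2 z
    · simp only [Set.indicator_of_notMem hz, mul_zero, lintegral_zero]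
  rw [lintegral_congr hind, lintegral_indicator hs]

lemma pi_gauss_sum : ∀ (m : ℕ) (v : Fin m → ℝ≥0),
    (Measure.pi fun i => gaussianReal 0 (v i)).map (fun x => ∑ i, x i)
      = gaussianReal 0 (∑ i, v i) := by
  intro m
  induction m with
  | zero =>
    intro v
    have h : (fun x : Fin 0 → ℝ => ∑ i, x i) = fun _ => (0:ℝ) := by
      funext x; simp
    rw [h, Measure.map_const, measure_univ, one_smul]
    simp
  | succ m ih =>
    intro v
    have hSm : Measurable (fun y : Fin m → ℝ => ∑ j, y j) :=
      Finset.univ.measurable_sum fun i _ => measurable_pi_apply i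
    have hS : Measurable (fun x : Fin (m+1) → ℝ => ∑ i, x i) :=
      Finset.univ.measurable_sum fun i _ => measurable_pi_apply i
    have hmp := (measurePreserving_piFinSuccAbove (fun i => gaussianReal 0 (v i)) 0).symm
    rw [← hmp.map_eq, Measure.map_map hS (MeasurableEquiv.measurable _)]
    have hcomp : ((fun x : Fin (m+1) → ℝ => ∑ i, x i)
          ∘ (MeasurableEquiv.piFinSuccAbove (fun _ => ℝ) 0).symm)
        = (fun p : ℝ × ℝ => p.1 + p.2)
          ∘ (Prod.map id (fun y : Fin m → ℝ => ∑ j, y j)) := by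
      funext q
      simp only [Function.comp_apply, MeasurableEquiv.piFinSuccAbove, MeasurableEquiv.symm_mk,
        MeasurableEquiv.coe_mk, Equiv.symm_symm, Fin.insertNthEquiv_apply, Prod.map_apply, id_eq]
      rw [Fin.sum_univ_succAbove _ 0]
      simp
    rw [hcomp, ← Measure.map_map measurable_add (measurable_id.prodMap hSm),
      ← Measure.map_prod_map _ _ measurable_id hSm, Measure.map_id, ih, gauss_conv]
    congr 1
    exact (Fin.sum_univ_succAbove v 0).symm

lemma pi_map_coord {ι : Type*} [Fintype ι] {α β : ι → Type*}
    [∀ i, MeasurableSpace (α i)] [∀ i, MeasurableSpace (β i)]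
    (μ : ∀ i, Measure (α i)) [∀ i, IsProbabilityMeasure (μ i)]
    (κ : ∀ i, Measure (β i)) [∀ i, SigmaFinite (κ i)]
    (f : ∀ i, α i → β i) (hf : ∀ i, Measurable (f i))
    (h : ∀ i, (μ i).map (f i) = κ i) :
    (Measure.pi μ).map (fun x i => f i (x i)) = Measure.pi κ := by
  have hmeas : Measurable (fun (x : ∀ i, α i) i => f i (x i)) :=
    measurable_pi_lambda _ fun i => (hf i).comp (measurable_pi_apply i)
  refine (Measure.pi_eq fun s hs => ?_).symm
  rw [Measure.map_apply hmeas (MeasurableSet.univ_pi hs)]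
  have hpre : (fun (x : ∀ i, α i) i => f i (x i)) ⁻¹' Set.univ.pi s
      = Set.univ.pi fun i => (f i) ⁻¹' (s i) := by
    ext x; simp [Set.mem_pi]
  rw [hpre, Measure.pi_pi]
  refine Finset.prod_congr rfl fun i _ => ?_
  rw [← h i, Measure.map_apply (hf i) (hs i)]

lemma fin_gauss_lin (m : ℕ) (a : Fin m → ℝ) (v : Fin m → ℝ≥0) :
    (Measure.pi fun i => gaussianReal 0 (v i)).map (fun x => ∑ i, a i * x i)
      = gaussianReal 0 (∑ i, (⟨(a i)^2, sq_nonneg (a i)⟩ * v i : ℝ≥0)) := by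
  have hdec : (fun x : Fin m → ℝ => ∑ i, a i * x i)
      = (fun y : Fin m → ℝ => ∑ i, y i) ∘ (fun x i => a i * x i) := rfl
  rw [hdec, ← Measure.map_map (Finset.univ.measurable_sum fun i _ => measurable_pi_apply i)
    (measurable_pi_lambda _ fun i => (measurable_pi_apply i).const_mul (a i))]
  rw [pi_map_coord _ (fun i => gaussianReal 0 ((⟨(a i)^2, sq_nonneg (a i)⟩ * v i : ℝ≥0)))
    (fun i x => a i * x) (fun i => measurable_const_mul (a i))
    (fun i => by have := gaussianReal_map_const_mul (μ := 0) (v := v i) (a i); rw [mul_zero] at this; exact this),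
    pi_gauss_sum]
lemma gauss_neg_inv : (gaussianReal 0 1).map (fun x : ℝ => (-1) * x) = gaussianReal 0 1 := by
  have h : (NNReal.mk ((-1:ℝ)^2) (sq_nonneg _) * 1 : ℝ≥0) = 1 := by
    apply NNReal.coe_injective; simp
  rw [show (fun x : ℝ => (-1) * x) = ((-1 : ℝ) * ·) from rfl, gaussianReal_map_const_mul, h,
    mul_zero]

lemma gauss_symm (u : ℝ) :
    gaussianReal 0 1 (Set.Iio u) = gaussianReal 0 1 (Set.Ioi (-u)) := by
  conv_rhs => rw [← gauss_neg_inv]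
  rw [Measure.map_apply (measurable_const_mul (-1)) measurableSet_Ioi]
  congr 1
  ext x
  simp only [Set.mem_Iio, Set.mem_preimage, Set.mem_Ioi]
  constructor <;> intro h <;> linarith

lemma gauss_half : gaussianReal 0 1 (Set.Ioi (0:ℝ)) = 1/2 := by
  have hsing : gaussianReal 0 1 ({(0:ℝ)} : Set ℝ) = 0 :=
    gaussianReal_absolutelyContinuous 0 one_ne_zero (measure_singleton 0)
  have hIic : gaussianReal 0 1 (Set.Iio (0:ℝ)) = gaussianReal 0 1 (Set.Ioi (0:ℝ)) := by
    simpa using gauss_symm 0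
  have hIci : gaussianReal 0 1 (Set.Ici (0:ℝ)) = gaussianReal 0 1 (Set.Ioi (0:ℝ)) := by
    refine le_antisymm ?_ (measure_mono Set.Ioi_subset_Ici_self)
    calc gaussianReal 0 1 (Set.Ici (0:ℝ)) ≤ gaussianReal 0 1 ({(0:ℝ)} ∪ Set.Ioi 0) := by
          refine measure_mono fun x hx => ?_
          rcases eq_or_lt_of_le (Set.mem_Ici.mp hx) with h | h
          · exact Or.inl (by simp [← h])
          · exact Or.inr h
      _ ≤ gaussianReal 0 1 {(0:ℝ)} + gaussianReal 0 1 (Set.Ioi 0) := measure_union_le _ _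
      _ = gaussianReal 0 1 (Set.Ioi 0) := by rw [hsing, zero_add]
  have htot : gaussianReal 0 1 (Set.Iio (0:ℝ)) + gaussianReal 0 1 (Set.Ici (0:ℝ)) = 1 := by
    rw [← measure_union (by simp [Set.disjoint_left]) measurableSet_Ici, Set.Iio_union_Ici,
      measure_univ]
  rw [hIic, hIci] at htot
  rw [ENNReal.eq_div_iff (by norm_num) (by norm_num), two_mul, htot]

/-- Let `0 < δ < 1/2`, `0 < ε ≤ 1`, and let `X, X'` differ only in
their first row with `Δ = X' − X ≠ 0`. Consider `Y(X) = X + C` with `C` i.i.d.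
N(0, σ²) entries and `S̄_{X,X'} = {y : p_{Y(X)}(y) > e^ε p_{Y(X')}(y)}`. If
`σ ≥ (‖Δ‖ γ̄_δ / ε)(1 + 1/(2γ̄_δ²))`, then `P[Y(X) ∈ S̄_{X,X'}] ≤ δ`, with `γ̄_δ` the
upper δ-quantile of N(0,1). -/
theorem stmt8 {n p : ℕ} (hn : 0 < n) (σ ε δ γ : ℝ)
    (hδ0 : 0 < δ) (hδ : δ < 1 / 2) (hε0 : 0 < ε) (hε : ε ≤ 1)
    (hγ : gaussianReal 0 1 (Set.Ioi γ) = ENNReal.ofReal δ)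
    (X X' : Mat n p)
    (hrow : ∀ k : Fin n, k ≠ ⟨0, hn⟩ → X k = X' k)
    (hne : X ≠ X')
    (hσ : σ ≥ frob (X' - X) * γ / ε * (1 + 1 / (2 * γ ^ 2))) :
    lawA σ X {y | gaussDens σ X y > Real.exp ε * gaussDens σ X' y}
      ≤ ENNReal.ofReal δ := by
  classical
  set Δ : Mat n p := X' - X with hΔdef
  set D : ℝ := frob Δ with hDdef
  have hsum_nonneg : ∀ M : Mat n p, (0:ℝ) ≤ ∑ i, ∑ j, (M i j)^2 := fun M =>
    Finset.sum_nonneg fun i _ => Finset.sum_nonneg fun j _ => sq_nonneg _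
  have hfc2 : ∀ M : Mat n p, frob M ^ 2 = ∑ i, ∑ j, (M i j)^2 := fun M =>
    Real.sq_sqrt (hsum_nonneg M)
  -- D > 0
  have hD : 0 < D := by
    rw [hDdef, frob, Real.sqrt_pos]
    obtain ⟨i, hi⟩ : ∃ i, X i ≠ X' i := by
      by_contra h; push_neg at h; exact hne (funext h)
    obtain ⟨j, hj⟩ : ∃ j, X i j ≠ X' i j := by
      by_contra h; push_neg at h; exact hi (funext h)
    have h1 : 0 < (Δ i j)^2 := by
      have hne0 : Δ i j ≠ 0 := sub_ne_zero.mpr (Ne.symm hj)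
      positivity
    calc (0:ℝ) < (Δ i j)^2 := h1
      _ ≤ ∑ j', (Δ i j')^2 :=
          Finset.single_le_sum (f := fun j' => (Δ i j')^2)
            (fun _ _ => sq_nonneg _) (Finset.mem_univ j)
      _ ≤ ∑ i', ∑ j', (Δ i' j')^2 :=
          Finset.single_le_sum (f := fun i' => ∑ j', (Δ i' j')^2)
            (fun i' _ => Finset.sum_nonneg fun j' _ => sq_nonneg _) (Finset.mem_univ i)
  -- γ > 0
  have hγpos : 0 < γ := by
    by_contra hle
    push_neg at hle
    have h1 : gaussianReal 0 1 (Set.Ioi (0:ℝ)) ≤ gaussianReal 0 1 (Set.Ioi γ) :=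
      measure_mono (Set.Ioi_subset_Ioi hle)
    rw [gauss_half, hγ] at h1
    have h2 : ENNReal.ofReal δ < ENNReal.ofReal (1/2) :=
      (ENNReal.ofReal_lt_ofReal_iff (by norm_num)).mpr hδ
    have h3 : ENNReal.ofReal (1/2) = (1/2 : ℝ≥0∞) := by
      rw [ENNReal.ofReal_div_of_pos (by norm_num), ENNReal.ofReal_one,
        ENNReal.ofReal_ofNat]
    rw [h3] at h2
    exact absurd (lt_of_le_of_lt h1 h2) (lt_irrefl _)
  have hσpos : 0 < σ := lt_of_lt_of_le (by positivity) hσ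
  have h2σ : (0:ℝ) < 2*σ^2 := by positivity
  -- measurability
  have hentry : ∀ (i : Fin n) (j : Fin p), Measurable fun y : Mat n p => y i j :=
    fun i j => (measurable_pi_apply j).comp (measurable_pi_apply i)
  have hq : ∀ Z : Mat n p, Measurable fun y : Mat n p => frob (y - Z) := by
    intro Z
    apply Real.continuous_sqrt.measurable.comp
    exact Finset.univ.measurable_sum fun i _ => Finset.univ.measurable_sum fun j _ =>
      ((hentry i j).sub_const (Z i j)).pow_const 2
  have hdens : ∀ Z : Mat n p, Measurable fun y : Mat n p => gaussDens σ Z y := fun Z =>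
    ((((hq Z).pow_const 2).neg.div_const _).exp).const_mul _
  have hSmeas : MeasurableSet {y : Mat n p | gaussDens σ X y > Real.exp ε * gaussDens σ X' y} :=
    measurableSet_lt ((hdens X').const_mul (Real.exp ε)) (hdens X)
  have hadd : Measurable fun c : Mat n p => X + c :=
    measurable_pi_lambda _ fun i => measurable_pi_lambda _ fun j =>
      (hentry i j).const_add (X i j)
  rw [lawA, Measure.map_apply hadd hSmeas]
  set t : ℝ := (D^2 - 2*σ^2*ε)/2 with ht
  set L : Mat n p → ℝ := fun c => ∑ i, ∑ j, Δ i j * c i j with hL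
  -- preimage identification
  have hpre : (fun c : Mat n p => X + c) ⁻¹'
      {y | gaussDens σ X y > Real.exp ε * gaussDens σ X' y} = L ⁻¹' (Set.Iio t) := by
    ext c
    simp only [Set.mem_preimage, Set.mem_setOf_eq, Set.mem_Iio, gt_iff_lt]
    rw [gaussDens, gaussDens]
    have e1 : X + c - X = c := add_sub_cancel_left X c
    have e2 : X + c - X' = c - Δ := by rw [hΔdef]; abel
    rw [e1, e2]
    set K : ℝ := (2*π*σ^2)^(-(n*p:ℝ)/2) with hK
    have hKpos : 0 < K := Real.rpow_pos_of_pos (by positivity) _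
    rw [show Real.exp ε * (K * Real.exp (-(frob (c - Δ)^2)/(2*σ^2)))
        = K * Real.exp (ε + -(frob (c - Δ)^2)/(2*σ^2)) by rw [Real.exp_add]; ring]
    rw [mul_lt_mul_iff_right₀ hKpos, Real.exp_lt_exp]
    rw [hfc2, hfc2]
    have hD2 : D^2 = ∑ i, ∑ j, (Δ i j)^2 := by rw [hDdef]; exact hfc2 Δ
    have hdiff : (∑ i, ∑ j, ((c - Δ) i j)^2)
        = (∑ i, ∑ j, (c i j)^2) - 2*(L c) + D^2 := by
      have hpt : ∀ (i : Fin n) (j : Fin p),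
          ((c - Δ) i j)^2 = (c i j)^2 - 2*(Δ i j * c i j) + (Δ i j)^2 := by
        intro i j; simp only [Pi.sub_apply]; ring
      calc (∑ i, ∑ j, ((c - Δ) i j)^2)
          = ∑ i, ∑ j, ((c i j)^2 - 2*(Δ i j * c i j) + (Δ i j)^2) := by
            exact Finset.sum_congr rfl fun i _ => Finset.sum_congr rfl fun j _ => hpt i j
        _ = (∑ i, ∑ j, (c i j)^2) - 2*(L c) + D^2 := by
            simp only [Finset.sum_add_distrib, Finset.sum_sub_distrib, hL, hD2,
              Finset.mul_sum]
    rw [hdiff]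
    have key : ∀ r s' : ℝ, (ε + -r/(2*σ^2) < -s'/(2*σ^2)) ↔ ε*(2*σ^2) < r - s' := by
      intro r s'
      constructor
      · intro h
        have h2 : ε < r/(2*σ^2) - s'/(2*σ^2) := by
          rw [neg_div, neg_div] at h; linarith
        rw [div_sub_div_same] at h2
        exact (lt_div_iff₀ h2σ).mp h2
      · intro h
        have h2 : ε < (r - s')/(2*σ^2) := (lt_div_iff₀ h2σ).mpr h
        rw [sub_div] at h2
        rw [neg_div, neg_div]
        linarith
    rw [key]
    constructor <;> intro h <;> linarith [ht, h]
  rw [hpre]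
  -- law of L
  set V : ℝ≥0 := (⟨σ^2, sq_nonneg σ⟩ : ℝ≥0) with hV
  set w : Fin n → ℝ≥0 := fun i => ∑ j, (⟨(Δ i j)^2, sq_nonneg (Δ i j)⟩ * V : ℝ≥0) with hw
  have hrowmeas : ∀ i : Fin n, Measurable fun r : Fin p → ℝ => ∑ j, Δ i j * r j :=
    fun i => Finset.univ.measurable_sum fun j _ => (measurable_pi_apply (X := fun _ : Fin p => ℝ) j).const_mul (Δ i j)
  have hLmeas : Measurable L :=
    Finset.univ.measurable_sum fun i _ => Finset.univ.measurable_sum fun j _ =>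
      (hentry i j).const_mul (Δ i j)
  have hlawL : (gaussNoise n p σ).map L = gaussianReal 0 (∑ i, w i) := by
    rw [gaussNoise]
    have hdec : L = (fun y : Fin n → ℝ => ∑ i, y i)
        ∘ (fun (c : Mat n p) i => ∑ j, Δ i j * c i j) := rfl
    have hg : Measurable fun (c : Mat n p) (i : Fin n) => ∑ j, Δ i j * c i j :=
      measurable_pi_lambda _ fun i => Finset.univ.measurable_sum fun j _ =>
        (hentry i j).const_mul (Δ i j)
    rw [hdec, ← Measure.map_map
      (Finset.univ.measurable_sum fun i _ => measurable_pi_apply i) hg]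
    rw [pi_map_coord _ (fun i => gaussianReal 0 (w i)) _ hrowmeas
      (fun i => fin_gauss_lin p (Δ i) (fun _ => V)), pi_gauss_sum]
  rw [← Measure.map_apply hLmeas measurableSet_Iio, hlawL]
  -- scaling
  set s : ℝ := σ * D with hs
  have hspos : 0 < s := mul_pos hσpos hD
  have hW : (NNReal.mk (s^2) (sq_nonneg s) * 1 : ℝ≥0) = ∑ i, w i := by
    apply NNReal.coe_injective
    push_cast [hw, hV]
    have hD2 : D^2 = ∑ i, ∑ j, (Δ i j)^2 := by rw [hDdef]; exact hfc2 Δ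
    rw [hs, mul_one, mul_pow, hD2, Finset.mul_sum]
    exact Finset.sum_congr rfl fun i _ => by
      rw [Finset.mul_sum]; exact Finset.sum_congr rfl fun j _ => by show σ ^ 2 * Δ i j ^ 2 = Δ i j ^ 2 * σ ^ 2; ring
  have hmap : (gaussianReal 0 1).map (s * ·) = gaussianReal 0 (∑ i, w i) := by
    rw [gaussianReal_map_const_mul, mul_zero, hW]
  rw [← hmap, Measure.map_apply (measurable_const_mul s) measurableSet_Iio]
  have hpre2 : (s * ·) ⁻¹' (Set.Iio t) = Set.Iio (t/s) := by
    ext x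
    simp only [Set.mem_preimage, Set.mem_Iio]
    exact (lt_div_iff₀' hspos).symm
  rw [hpre2, gauss_symm, ← hγ]
  -- final inequality: γ ≤ -(t/s)
  refine measure_mono (Set.Ioi_subset_Ioi ?_)
  have hσε : D*γ + D/(2*γ) ≤ σ*ε := by
    have hc : (D*γ/ε*(1+1/(2*γ^2)))*ε = D*γ + D/(2*γ) := by
      field_simp
    have h2 : (D*γ/ε*(1+1/(2*γ^2)))*ε ≤ σ*ε :=
      mul_le_mul_of_nonneg_right hσ (le_of_lt hε0)
    rw [hc] at h2; linarith
  have hσD : D*γ ≤ σ := by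
    have ha : D*γ/ε ≤ D*γ/ε*(1+1/(2*γ^2)) :=
      le_mul_of_one_le_right (by positivity) (by
        have : (0:ℝ) < 1/(2*γ^2) := by positivity
        linarith)
    have hb : D*γ ≤ D*γ/ε := by
      rw [le_div_iff₀ hε0]
      nlinarith [mul_pos hD hγpos]
    linarith
  have hgoal : γ*(2*s) ≤ 2*σ^2*ε - D^2 := by
    have hA := mul_le_mul_of_nonneg_left hσε (by positivity : (0:ℝ) ≤ 2*σ)
    have hB := mul_le_mul_of_nonneg_right hσD (by positivity : (0:ℝ) ≤ D/γ)
    have hid1 : D*γ*(D/γ) = D^2 := by field_simp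
    have hid2 : 2*σ*(D/(2*γ)) = σ*(D/γ) := by
      field_simp
    have hid3 : 2*σ*(D*γ + D/(2*γ)) = 2*σ*(D*γ) + 2*σ*(D/(2*γ)) := by ring
    rw [hs]
    nlinarith [hA, hB, hid1, hid2, hid3]
  have hts : -(t/s) = (2*σ^2*ε - D^2)/(2*s) := by
    rw [ht]
    field_simp
    ring
  rw [hts, le_div_iff₀ (by positivity : (0:ℝ) < 2*s)]
  linarith [hgoal]
end
end

section
/- Let n, p ≥ 1 and 0 < δ < 1, and let γ_{δ,np} be the upper δ-quantile of the chi-square distribution with np degrees of freedom, i.e., P[χ²_{np} > γ_{δ,np}] = δ. Then γ_{δ,np} ≤ 2np + 3 ln(1/δ). -/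
open MeasureTheory ProbabilityTheory Real

noncomputable section

/-- The chi-square distribution with `k` degrees of freedom: the law of the sum of
squares of `k` independent standard Gaussian random variables. -/
def chiSq (k : ℕ) : Measure ℝ :=
  (Measure.pi fun _ : Fin k => gaussianReal 0 1).map fun x => ∑ i, (x i) ^ 2

namespace Stmt19Aux

/-- Integrability of a product of copies of an integrable function on a product measure. -/
lemma integrable_pi_prod {ν : Measure ℝ} [SigmaFinite ν] {f : ℝ → ℝ}
    (hf : Integrable f ν) (k : ℕ) :
    Integrable (fun x : Fin k → ℝ => ∏ i, f (x i)) (Measure.pi fun _ => ν) := by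
  induction k with
  | zero =>
      simp only [Finset.univ_eq_empty, Finset.prod_empty, integrable_const_iff,
        one_ne_zero, Measure.pi_empty_univ, ENNReal.one_lt_top, or_true]
      exact Or.inr ⟨by simp [Measure.pi_empty_univ]⟩
  | succ n n_ih =>
      have hmp := ((MeasureTheory.measurePreserving_piFinSuccAbove
        (fun _ : Fin (n + 1) => ν) 0).symm)
      rw [← hmp.integrable_comp_emb (MeasurableEquiv.measurableEmbedding _)]
      simp_rw [MeasurableEquiv.piFinSuccAbove_symm_apply, Fin.insertNthEquiv,
        Fin.prod_univ_succ, Fin.insertNth_zero]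
      simp only [Fin.zero_succAbove, Function.comp_def, Fin.cons_zero, Fin.cons_succ]
      exact hf.mul_prod n_ih

/-- Integral of a product of copies of an integrable function on a product measure. -/
lemma integral_pi_prod {ν : Measure ℝ} [SigmaFinite ν] [IsProbabilityMeasure ν] {f : ℝ → ℝ}
    (hf : Integrable f ν) (k : ℕ) :
    ∫ x : Fin k → ℝ, ∏ i, f (x i) ∂(Measure.pi fun _ => ν) = (∫ x, f x ∂ν) ^ k := by
  induction k with
  | zero => simp
  | succ n n_ih =>
      have hmp := ((MeasureTheory.measurePreserving_piFinSuccAbove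
        (fun _ : Fin (n + 1) => ν) 0).symm)
      rw [← hmp.integral_comp']
      simp_rw [MeasurableEquiv.piFinSuccAbove_symm_apply, Fin.insertNthEquiv,
        Fin.prod_univ_succ, Fin.insertNth_zero]
      simp only [Equiv.coe_fn_mk, Fin.cons_zero, Fin.cons_succ, cast_eq]
      rw [integral_prod_mul (f := f) (g := fun x : Fin n → ℝ => ∏ i, f (x i)), n_ih,
        pow_succ, mul_comm]

lemma key_eq : (fun x : ℝ => ((gaussianPDFReal 0 1 x).toNNReal : NNReal) • rexp (x ^ 2 / 3))
    = fun x : ℝ => (√(2 * π))⁻¹ * rexp (-(1/6) * x ^ 2) := by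
  ext x
  simp only [NNReal.smul_def, smul_eq_mul,
    Real.coe_toNNReal _ (gaussianPDFReal_nonneg 0 1 x)]
  simp only [gaussianPDFReal, NNReal.coe_one, mul_one, sub_zero]
  rw [mul_assoc, ← Real.exp_add]
  ring_nf

lemma hpdf_eq : (gaussianPDF 0 1) = fun x => ((gaussianPDFReal 0 1 x).toNNReal : ENNReal) := by
  ext x; rfl

lemma integrable_exp_sq_third :
    Integrable (fun x : ℝ => rexp (x ^ 2 / 3)) (gaussianReal 0 1) := by
  rw [gaussianReal_of_var_ne_zero 0 one_ne_zero, hpdf_eq,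
    integrable_withDensity_iff_integrable_smul
      (measurable_gaussianPDFReal 0 1).real_toNNReal, key_eq]
  exact (integrable_exp_neg_mul_sq (by norm_num : (0:ℝ) < 1/6)).const_mul _

lemma integral_exp_sq_third :
    ∫ x, rexp (x ^ 2 / 3) ∂(gaussianReal 0 1) = √3 := by
  rw [gaussianReal_of_var_ne_zero 0 one_ne_zero, hpdf_eq,
    integral_withDensity_eq_integral_smul
      (measurable_gaussianPDFReal 0 1).real_toNNReal, key_eq,
    integral_const_mul, integral_gaussian]
  rw [← Real.sqrt_inv, ← Real.sqrt_mul (by positivity)]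
  congr 1
  have hpi : (0:ℝ) < π := Real.pi_pos
  field_simp
  ring

lemma c_lt_one : √3 * rexp (-(2/3)) < 1 := by
  have h3 : (3:ℝ) < rexp (4/3) := by
    have h4 : (27:ℝ) < rexp 4 := by
      have := Real.exp_one_gt_d9
      have h1 : (2.7:ℝ) ^ 4 ≤ (rexp 1) ^ 4 := by
        apply pow_le_pow_left₀ (by norm_num)
        linarith
      have h2 : rexp 1 ^ 4 = rexp 4 := by
        rw [← Real.exp_nat_mul]; norm_num
      nlinarith
    have h5 : rexp (4/3) ^ 3 = rexp 4 := by
      rw [← Real.exp_nat_mul]; norm_num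
    nlinarith [Real.exp_pos (4/3 : ℝ), sq_nonneg (rexp (4/3) - 3), sq_nonneg (rexp (4/3) + 3)]
  have hs : √3 < rexp (2/3) := by
    have h6 : (√3) ^ 2 < rexp (2/3) ^ 2 := by
      rw [Real.sq_sqrt (by norm_num : (0:ℝ) ≤ 3), ← Real.exp_nat_mul]
      convert h3 using 2
      norm_num
    exact lt_of_pow_lt_pow_left₀ 2 (Real.exp_pos _).le h6
  calc √3 * rexp (-(2/3)) < rexp (2/3) * rexp (-(2/3)) := by
        apply mul_lt_mul_of_pos_right hs (Real.exp_pos _)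
    _ = 1 := by rw [← Real.exp_add]; norm_num

end Stmt19Aux

open Stmt19Aux in
/-- Let `n, p ≥ 1`, `0 < δ < 1`, and let `γ_{δ,np}` be the upper
δ-quantile of the chi-square distribution with `np` degrees of freedom, i.e.
`P[χ²_{np} > γ_{δ,np}] = δ`. Then `γ_{δ,np} ≤ 2np + 3 ln(1/δ)`. -/
theorem stmt19 (n p : ℕ) (hn : 1 ≤ n) (hp : 1 ≤ p) (δ γ : ℝ)
    (hδ0 : 0 < δ) (hδ1 : δ < 1)
    (hγ : chiSq (n * p) (Set.Ioi γ) = ENNReal.ofReal δ) :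
    γ ≤ 2 * ((n : ℝ) * p) + 3 * Real.log (1 / δ) := by
  by_contra hlt
  push_neg at hlt
  set k : ℕ := n * p with hk
  set B : ℝ := 2 * ((n : ℝ) * p) + 3 * Real.log (1 / δ) with hB
  set μ : Measure (Fin k → ℝ) := Measure.pi fun _ => gaussianReal 0 1 with hμ
  set X : (Fin k → ℝ) → ℝ := fun x => ∑ i, (x i) ^ 2 with hX
  have hXm : Measurable X := by
    apply Finset.measurable_sum
    intro i _
    exact (measurable_pi_apply i).pow_const 2
  have hprob : IsProbabilityMeasure μ := by
    rw [hμ]; infer_instance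
  -- the exponential moment
  have h_int : Integrable (fun ω => rexp ((1/3 : ℝ) * X ω)) μ := by
    have : (fun ω : Fin k → ℝ => rexp ((1/3 : ℝ) * X ω))
        = fun ω => ∏ i, rexp ((ω i) ^ 2 / 3) := by
      ext ω
      rw [← Real.exp_sum, hX, Finset.mul_sum]
      congr 1
      apply Finset.sum_congr rfl
      intro i _
      ring
    rw [this]
    exact integrable_pi_prod integrable_exp_sq_third k
  have h_mgf : mgf X μ (1/3) = (√3) ^ k := by
    rw [mgf]
    have : (fun ω : Fin k → ℝ => rexp ((1/3 : ℝ) * X ω))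
        = fun ω => ∏ i, rexp ((ω i) ^ 2 / 3) := by
      ext ω
      rw [← Real.exp_sum, hX, Finset.mul_sum]
      congr 1
      apply Finset.sum_congr rfl
      intro i _
      ring
    calc ∫ ω, rexp ((1/3) * X ω) ∂μ = ∫ ω : Fin k → ℝ, ∏ i, rexp ((ω i) ^ 2 / 3) ∂μ := by
          rw [this]
      _ = (∫ x, rexp (x ^ 2 / 3) ∂(gaussianReal 0 1)) ^ k :=
          integral_pi_prod integrable_exp_sq_third k
      _ = (√3) ^ k := by rw [integral_exp_sq_third]
  -- Chernoff bound
  have hcher := measure_ge_le_exp_mul_mgf (X := X) (μ := μ) B (by norm_num : (0:ℝ) ≤ 1/3) h_int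
  -- the measure of the tail
  have hmap : chiSq k (Set.Ioi γ) = μ (X ⁻¹' Set.Ioi γ) := by
    rw [chiSq, Measure.map_apply hXm measurableSet_Ioi]
  have hδeq : (μ (X ⁻¹' Set.Ioi γ)).toReal = δ := by
    rw [← hmap, hγ, ENNReal.toReal_ofReal hδ0.le]
  have hsub : X ⁻¹' Set.Ioi γ ⊆ {ω | B ≤ X ω} := by
    intro ω hω
    simp only [Set.mem_preimage, Set.mem_Ioi] at hω
    exact le_of_lt (lt_trans hlt hω)
  have hmono : (μ (X ⁻¹' Set.Ioi γ)).toReal ≤ (μ {ω | B ≤ X ω}).toReal := by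
    apply ENNReal.toReal_mono (measure_ne_top μ _)
    exact measure_mono hsub
  have hδle : δ ≤ rexp (-(1/3) * B) * mgf X μ (1/3) := by
    calc δ = (μ (X ⁻¹' Set.Ioi γ)).toReal := hδeq.symm
      _ ≤ (μ {ω | B ≤ X ω}).toReal := hmono
      _ ≤ rexp (-(1/3) * B) * mgf X μ (1/3) := hcher
  -- compute the bound
  have hexp : rexp (-(1/3) * B) = δ * rexp (-(2/3)) ^ k := by
    have h1 : -(1/3 : ℝ) * B = (k : ℝ) * (-(2/3)) + Real.log δ := by
      rw [hB, hk]
      have : Real.log (1 / δ) = -Real.log δ := by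
        rw [one_div, Real.log_inv]
      rw [this]
      push_cast
      ring
    rw [h1, Real.exp_add, Real.exp_nat_mul, Real.exp_log hδ0, mul_comm]
  have hfinal : δ ≤ δ * (√3 * rexp (-(2/3))) ^ k := by
    calc δ ≤ rexp (-(1/3) * B) * mgf X μ (1/3) := hδle
      _ = δ * rexp (-(2/3)) ^ k * (√3) ^ k := by rw [hexp, h_mgf]
      _ = δ * (√3 * rexp (-(2/3))) ^ k := by rw [mul_pow]; ring
  have hkpos : k ≠ 0 := by positivity
  have hclt : (√3 * rexp (-(2/3))) ^ k < 1 := by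
    apply pow_lt_one₀ (by positivity) c_lt_one hkpos
  nlinarith [hfinal, hclt, hδ0]
end
end
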